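/- arXiv:1406.3069 — 4 statements merged into one kernel-verified Lean document; each statement's English description precedes it below -/
import Mathlib

section
/- If Y and Ỹ are conformal Killing-Yano tensors of order p with associated tensors h and h̃ respectively, then the symmetric tensor K_{ab} = Y_{(a}{}^{c₂…c_p} Ỹ_{b)c₂…c_p} is a conformal Killing tensor of order two: ∇_{(a} K_{bc)} = g_{(ab} k_{c)}, where k_c = (2/p)(Y_c{}^{d₂…d_p} h̃_{d₂…d_p} + Ỹ_c{}^{d₂…d_p} h_{d₂…d_p}). -/
open Finset

/-- The sign of a permutation, as a real number. -/
noncomputable def esign {p : ℕ} (σ : Equiv.Perm (Fin p)) : ℝ :=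
  ((Equiv.Perm.sign σ : ℤ) : ℝ)

/-- A rank-`p` tensor (in components) is totally antisymmetric. -/
def IsAlt {ι : Type*} {p : ℕ} (T : (Fin p → ι) → ℝ) : Prop :=
  ∀ (σ : Equiv.Perm (Fin p)) (v : Fin p → ι), T (v ∘ σ) = esign σ * T v

/-- Antisymmetrization of a rank-`p` tensor (with the `1/p!` factor). -/
noncomputable def alt {ι : Type*} {p : ℕ} (T : (Fin p → ι) → ℝ) : (Fin p → ι) → ℝ :=
  fun v => (Nat.factorial p : ℝ)⁻¹ * ∑ σ : Equiv.Perm (Fin p), esign σ * T (v ∘ σ)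

lemma esign_mul {p : ℕ} (σ τ : Equiv.Perm (Fin p)) : esign (σ * τ) = esign σ * esign τ := by
  simp [esign]

lemma esign_sq {p : ℕ} (σ : Equiv.Perm (Fin p)) : esign σ * esign σ = 1 := by
  rcases Int.units_eq_one_or (Equiv.Perm.sign σ) with h | h <;> simp [esign, h]

lemma isAlt_alt {ι : Type*} {p : ℕ} (T : (Fin p → ι) → ℝ) : IsAlt (alt T) := by
  intro σ v
  unfold alt
  have key : ∀ τ : Equiv.Perm (Fin p),
      esign τ * T ((v ∘ σ) ∘ τ) = esign σ * (esign (σ * τ) * T (v ∘ ⇑(σ * τ))) := by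
    intro τ
    have h1 : (v ∘ ⇑σ) ∘ ⇑τ = v ∘ ⇑(σ * τ) := rfl
    rw [h1, esign_mul, ← mul_assoc, ← mul_assoc, esign_sq, one_mul]
  calc (Nat.factorial p : ℝ)⁻¹ * ∑ τ : Equiv.Perm (Fin p), esign τ * T ((v ∘ σ) ∘ τ)
      = (Nat.factorial p : ℝ)⁻¹ * (esign σ * ∑ τ : Equiv.Perm (Fin p),
          esign (σ * τ) * T (v ∘ ⇑(σ * τ))) := by
        simp only [Finset.mul_sum]
        exact Finset.sum_congr rfl fun τ _ => by rw [key τ]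
    _ = esign σ * ((Nat.factorial p : ℝ)⁻¹ * ∑ ρ : Equiv.Perm (Fin p),
          esign ρ * T (v ∘ ρ)) := by
        rw [Fintype.sum_equiv (Equiv.mulLeft σ)
          (fun τ => esign (σ * τ) * T (v ∘ ⇑(σ * τ)))
          (fun ρ => esign ρ * T (v ∘ ⇑ρ)) (fun τ => by simp)]
        ring

lemma IsAlt.comp_swap {ι : Type*} {p : ℕ} {T : (Fin p → ι) → ℝ} (hT : IsAlt T)
    {i k : Fin p} (hik : i ≠ k) (v : Fin p → ι) : T (v ∘ Equiv.swap i k) = - T v := by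
  rw [hT (Equiv.swap i k) v]
  simp [esign, Equiv.Perm.sign_swap hik]

/-- The tensor `g_{a[b₁} h_{b₂…b_{q+1}]}` :
antisymmetrization over the last `q+1` indices of `g_{a b₁} h_{b₂…b_{q+1}}`. -/
noncomputable def ghAlt {ι : Type*} {q : ℕ} (g : ι → ι → ℝ) (h : (Fin q → ι) → ℝ)
    (a : ι) : (Fin (q + 1) → ι) → ℝ :=
  alt fun v => g a (v 0) * h fun i => v i.succ


lemma ghAlt_cons {ι : Type*} {q : ℕ} (g : ι → ι → ℝ) {h : (Fin q → ι) → ℝ}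
    (hh : IsAlt h) (x y : ι) (u : Fin q → ι) :
    ghAlt g h x (Fin.cons y u) =
      ((q : ℝ) + 1)⁻¹ * (g x y * h u - ∑ j, g x (u j) * h (Function.update u j y)) := by
  set v : Fin (q + 1) → ι := Fin.cons y u with hv
  have main : ∀ kτ : Fin (q + 1) × Equiv.Perm (Fin q),
      esign (Equiv.Perm.decomposeFin.symm kτ) *
        (g x ((v ∘ Equiv.Perm.decomposeFin.symm kτ) 0) *
          h fun i => (v ∘ Equiv.Perm.decomposeFin.symm kτ) i.succ)
      = (if kτ.1 = 0 then 1 else -1) * (g x (v kτ.1) *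
          h fun i => v (Equiv.swap 0 kτ.1 i.succ)) := by
    rintro ⟨k, τ⟩
    have h0 : (v ∘ Equiv.Perm.decomposeFin.symm (k, τ)) 0 = v k := by
      simp [Equiv.Perm.decomposeFin_symm_apply_zero]
    have hsucc : (fun i => (v ∘ Equiv.Perm.decomposeFin.symm (k, τ)) i.succ)
        = (fun i => v (Equiv.swap 0 k i.succ)) ∘ τ := by
      funext i
      simp [Equiv.Perm.decomposeFin_symm_apply_succ]
    have hsign : esign (Equiv.Perm.decomposeFin.symm (k, τ))
        = (if k = 0 then 1 else -1) * esign τ := by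
      unfold esign
      rw [Equiv.Perm.decomposeFin.symm_sign]
      split <;> push_cast <;> ring
    rw [h0, hsucc, hh τ, hsign]
    linear_combination ((if k = 0 then (1:ℝ) else -1) * g x (v k) *
      h fun i => v (Equiv.swap 0 k i.succ)) * esign_sq τ
  have step1 : (∑ σ : Equiv.Perm (Fin (q+1)),
        esign σ * (g x ((v ∘ σ) 0) * h fun i => (v ∘ σ) i.succ))
      = ∑ k : Fin (q+1), ∑ τ : Equiv.Perm (Fin q),
          (if k = 0 then (1:ℝ) else -1) *
            (g x (v k) * h fun i => v (Equiv.swap 0 k i.succ)) := by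
    rw [← Equiv.sum_comp Equiv.Perm.decomposeFin.symm
      (fun σ => esign σ * (g x ((v ∘ σ) 0) * h fun i => (v ∘ σ) i.succ)),
      Fintype.sum_prod_type]
    exact Finset.sum_congr rfl fun k _ => Finset.sum_congr rfl fun τ _ => main (k, τ)
  have step2 : ∀ k : Fin (q+1),
      (∑ _τ : Equiv.Perm (Fin q), (if k = 0 then (1:ℝ) else -1) *
          (g x (v k) * h fun i => v (Equiv.swap 0 k i.succ)))
      = (Nat.factorial q : ℝ) * ((if k = 0 then (1:ℝ) else -1) *
          (g x (v k) * h fun i => v (Equiv.swap 0 k i.succ))) := by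
    intro k
    rw [Finset.sum_const, card_univ, Fintype.card_perm, nsmul_eq_mul, Fintype.card_fin]
  have W0 : (fun i => v (Equiv.swap (0 : Fin (q+1)) 0 i.succ)) = u := by
    funext i; simp [Equiv.swap_self, hv]
  have Wsucc : ∀ j : Fin q,
      (fun i => v (Equiv.swap (0 : Fin (q+1)) j.succ i.succ)) = Function.update u j y := by
    intro j; funext i
    rcases eq_or_ne i j with rfl | hij
    · rw [Equiv.swap_apply_right]
      simp [hv]
    · rw [Equiv.swap_apply_of_ne_of_ne (Fin.succ_ne_zero i) ((Fin.succ_injective q).ne hij)]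
      simp [hv, Function.update_of_ne hij]
  have lhs_eq : ghAlt g h x v = (Nat.factorial (q+1) : ℝ)⁻¹ *
      ∑ σ : Equiv.Perm (Fin (q+1)),
        esign σ * (g x ((v ∘ σ) 0) * h fun i => (v ∘ σ) i.succ) := rfl
  rw [lhs_eq, step1, Fin.sum_univ_succ, step2 0]
  rw [Finset.sum_congr rfl fun j (_ : j ∈ univ) => step2 j.succ]
  simp only [W0, Wsucc, if_pos rfl, if_neg (Fin.succ_ne_zero _), ↓reduceIte]
  simp only [Fin.cons_zero, Fin.cons_succ,
    hv]
  have hfac : ((q+1).factorial : ℝ) = ((q:ℝ)+1) * (q.factorial : ℝ) := by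
    rw [Nat.factorial_succ]; push_cast; ring
  have hq : (q.factorial : ℝ) ≠ 0 := Nat.cast_ne_zero.2 (Nat.factorial_ne_zero q)
  have hq1 : ((q:ℝ)+1) ≠ 0 := by positivity
  rw [← Finset.mul_sum, hfac, mul_inv]
  have hsum : (∑ j : Fin q, (-1:ℝ) * (g x (u j) * h (Function.update u j y)))
      = - ∑ j : Fin q, g x (u j) * h (Function.update u j y) := by
    simp [neg_one_mul]
  rw [hsum]
  field_simp
  ring

lemma traceCancel {ι : Type*} [Fintype ι] [DecidableEq ι] {q : ℕ} (g ginv : ι → ι → ℝ)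
    (hgsymm : ∀ a b, g a b = g b a) (hginvsymm : ∀ a b, ginv a b = ginv b a)
    (hinv : ∀ a b, ∑ c, ginv a c * g c b = if a = b then (1 : ℝ) else 0)
    (H : (Fin q → ι) → ℝ) {Z : (Fin (q + 1) → ι) → ℝ} (hZ : IsAlt Z)
    (j : Fin q) (x y z : ι) :
    (∑ u : Fin q → ι, ∑ w : Fin q → ι, (∏ i, ginv (u i) (w i)) *
        (g x (u j) * H (Function.update u j y) * Z (Fin.cons z w)))
    + (∑ u : Fin q → ι, ∑ w : Fin q → ι, (∏ i, ginv (u i) (w i)) *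
        (g z (u j) * H (Function.update u j y) * Z (Fin.cons x w))) = 0 := by
  obtain ⟨q', rfl⟩ : ∃ q', q = q' + 1 := ⟨q - 1, by have := j.pos; omega⟩
  have expand : ∀ X zz : ι,
      (∑ u : Fin (q' + 1) → ι, ∑ w : Fin (q' + 1) → ι, (∏ i, ginv (u i) (w i)) *
          (g X (u j) * H (Function.update u j y) * Z (Fin.cons zz w)))
      = ∑ u' : Fin q' → ι, ∑ w' : Fin q' → ι, (∏ i, ginv (u' i) (w' i)) *
          (H (Fin.insertNth j y u') * Z (Fin.cons zz (Fin.insertNth j X w'))) := by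
    intro X zz
    rw [← Equiv.sum_comp (Fin.insertNthEquiv (fun _ => ι) j)
      (fun u => ∑ w : Fin (q' + 1) → ι, (∏ i, ginv (u i) (w i)) *
        (g X (u j) * H (Function.update u j y) * Z (Fin.cons zz w))), Fintype.sum_prod_type]
    have inner : ∀ (c : ι) (u' : Fin q' → ι),
        (∑ w : Fin (q' + 1) → ι,
          (∏ i, ginv ((Fin.insertNthEquiv (fun _ => ι) j) (c, u') i) (w i)) *
            (g X ((Fin.insertNthEquiv (fun _ => ι) j) (c, u') j) *
              H (Function.update ((Fin.insertNthEquiv (fun _ => ι) j) (c, u')) j y) *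
              Z (Fin.cons zz w)))
        = ∑ d : ι, ∑ w' : Fin q' → ι,
            (ginv c d * ∏ i, ginv (u' i) (w' i)) *
              (g X c * H (Fin.insertNth j y u') * Z (Fin.cons zz (Fin.insertNth j d w'))) := by
      intro c u'
      rw [← Equiv.sum_comp (Fin.insertNthEquiv (fun _ => ι) j)
        (fun w => (∏ i, ginv ((Fin.insertNthEquiv (fun _ => ι) j) (c, u') i) (w i)) *
          (g X ((Fin.insertNthEquiv (fun _ => ι) j) (c, u') j) *
            H (Function.update ((Fin.insertNthEquiv (fun _ => ι) j) (c, u')) j y) *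
            Z (Fin.cons zz w))), Fintype.sum_prod_type]
      refine Finset.sum_congr rfl fun d _ => Finset.sum_congr rfl fun w' _ => ?_
      have hprod : (∏ i, ginv ((Fin.insertNthEquiv (fun _ => ι) j) (c, u') i)
            ((Fin.insertNthEquiv (fun _ => ι) j) (d, w') i))
          = ginv c d * ∏ i, ginv (u' i) (w' i) := by
        rw [Fin.prod_univ_succAbove
          (fun i => ginv ((Fin.insertNthEquiv (fun _ => ι) j) (c, u') i)
            ((Fin.insertNthEquiv (fun _ => ι) j) (d, w') i)) j]
        simp [Fin.insertNthEquiv_apply, Fin.insertNth_apply_same, Fin.insertNth_apply_succAbove]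
      rw [hprod]
      have h2 : Function.update ((Fin.insertNthEquiv (fun _ => ι) j) (c, u')) j y
          = Fin.insertNth j y u' := Fin.update_insertNth (α := fun _ => ι) j c y u'
      have h3 : ((Fin.insertNthEquiv (fun _ => ι) j) (d, w')) = Fin.insertNth j d w' := rfl
      have h4 : ((Fin.insertNthEquiv (fun _ => ι) j) (c, u')) j = c :=
        Fin.insertNth_apply_same (α := fun _ => ι) j c u'
      rw [h2, h3, h4]
    calc ∑ c : ι, ∑ u' : Fin q' → ι,
          (∑ w : Fin (q' + 1) → ι,
            (∏ i, ginv ((Fin.insertNthEquiv (fun _ => ι) j) (c, u') i) (w i)) *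
              (g X ((Fin.insertNthEquiv (fun _ => ι) j) (c, u') j) *
                H (Function.update ((Fin.insertNthEquiv (fun _ => ι) j) (c, u')) j y) *
                Z (Fin.cons zz w)))
        = ∑ c : ι, ∑ u' : Fin q' → ι, ∑ d : ι, ∑ w' : Fin q' → ι,
            (ginv c d * ∏ i, ginv (u' i) (w' i)) *
              (g X c * H (Fin.insertNth j y u') * Z (Fin.cons zz (Fin.insertNth j d w'))) := by
          exact Finset.sum_congr rfl fun c _ => Finset.sum_congr rfl fun u' _ => inner c u'
      _ = ∑ u' : Fin q' → ι, ∑ w' : Fin q' → ι, ∑ d : ι, ∑ c : ι,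
            (ginv c d * ∏ i, ginv (u' i) (w' i)) *
              (g X c * H (Fin.insertNth j y u') * Z (Fin.cons zz (Fin.insertNth j d w'))) := by
          rw [Finset.sum_comm]
          refine Finset.sum_congr rfl fun u' _ => ?_
          refine (Finset.sum_comm).trans ?_
          refine (Finset.sum_congr rfl fun d _ => Finset.sum_comm).trans ?_
          exact Finset.sum_comm
      _ = ∑ u' : Fin q' → ι, ∑ w' : Fin q' → ι, (∏ i, ginv (u' i) (w' i)) *
            (H (Fin.insertNth j y u') * Z (Fin.cons zz (Fin.insertNth j X w'))) := by
          refine Finset.sum_congr rfl fun u' _ => Finset.sum_congr rfl fun w' _ => ?_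
          have hc : ∀ d : ι, (∑ c : ι,
              (ginv c d * ∏ i, ginv (u' i) (w' i)) *
                (g X c * H (Fin.insertNth j y u') * Z (Fin.cons zz (Fin.insertNth j d w'))))
              = (if d = X then (1:ℝ) else 0) * ((∏ i, ginv (u' i) (w' i)) *
                  (H (Fin.insertNth j y u') * Z (Fin.cons zz (Fin.insertNth j d w')))) := by
            intro d
            have : ∀ c : ι, (ginv c d * ∏ i, ginv (u' i) (w' i)) *
                (g X c * H (Fin.insertNth j y u') * Z (Fin.cons zz (Fin.insertNth j d w')))
                = (ginv d c * g c X) * ((∏ i, ginv (u' i) (w' i)) *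
                  (H (Fin.insertNth j y u') * Z (Fin.cons zz (Fin.insertNth j d w')))) := by
              intro c; rw [hginvsymm d c, hgsymm c X]; ring
            rw [Finset.sum_congr rfl fun c _ => this c, ← Finset.sum_mul, hinv d X]
          rw [Finset.sum_congr rfl fun d (_ : d ∈ univ) => hc d]
          simp only [ite_mul, one_mul, zero_mul]
          rw [Finset.sum_ite_eq' univ X]
          simp
  have flip : ∀ w' : Fin q' → ι,
      Z (Fin.cons z (Fin.insertNth j x w')) = - Z (Fin.cons x (Fin.insertNth j z w')) := by
    intro w'
    have hne : (0 : Fin (q' + 1 + 1)) ≠ j.succ := (Fin.succ_ne_zero j).symm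
    have hcomp : Fin.cons z (Fin.insertNth j x w')
        = (Fin.cons x (Fin.insertNth j z w')) ∘ (Equiv.swap (0 : Fin (q' + 1 + 1)) j.succ) := by
      funext i
      refine Fin.cases ?_ (fun m => ?_) i
      · simp [Equiv.swap_apply_left, Fin.insertNth_apply_same]
      · rcases eq_or_ne m j with rfl | hmj
        · simp [Equiv.swap_apply_right, Fin.insertNth_apply_same]
        · have h1 : (Equiv.swap (0 : Fin (q' + 1 + 1)) j.succ) m.succ = m.succ :=
            Equiv.swap_apply_of_ne_of_ne (Fin.succ_ne_zero m) ((Fin.succ_injective _).ne hmj)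
          rw [Function.comp_apply, h1]
          obtain ⟨t, ht⟩ := Fin.exists_succAbove_eq hmj
          simp [Fin.cons_succ, ← ht, Fin.insertNth_apply_succAbove]
    rw [hcomp, hZ.comp_swap hne]
  rw [expand x z, expand z x, ← Finset.sum_add_distrib]
  rw [Finset.sum_congr rfl fun u' (_ : u' ∈ univ) => (Finset.sum_add_distrib).symm]
  have pt : ∀ (u' w' : Fin q' → ι),
      (∏ i, ginv (u' i) (w' i)) *
          (H (Fin.insertNth j y u') * Z (Fin.cons z (Fin.insertNth j x w')))
        + (∏ i, ginv (u' i) (w' i)) *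
          (H (Fin.insertNth j y u') * Z (Fin.cons x (Fin.insertNth j z w'))) = 0 := by
    intro u' w'; rw [flip w']; ring
  rw [Finset.sum_congr rfl fun u' (_ : u' ∈ univ) =>
    Finset.sum_congr rfl fun w' (_ : w' ∈ univ) => pt u' w']
  simp

/-- View a "derivative" `D : ι → ((Fin p → ι) → ℝ)` as a rank-`(p+1)` tensor. -/
def totalD {ι : Type*} {p : ℕ} (D : ι → (Fin p → ι) → ℝ) : (Fin (p + 1) → ι) → ℝ :=
  fun w => D (w 0) fun i => w i.succ

/-- Leibniz expression for `∇_x K_{yz}` where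
`K_{yz} = Y_{(y}{}^{c₂…c_p} Ỹ_{z)c₂…c_p}` (indices raised with `ginv`). -/
noncomputable def gradK {ι : Type*} [Fintype ι] {q : ℕ} (ginv : ι → ι → ℝ)
    (Y Y' : (Fin (q + 1) → ι) → ℝ) (DY DY' : ι → (Fin (q + 1) → ι) → ℝ)
    (x y z : ι) : ℝ :=
  (1 / 2) * ∑ u : Fin q → ι, ∑ w : Fin q → ι, (∏ i, ginv (u i) (w i)) *
    (DY x (Fin.cons y u) * Y' (Fin.cons z w) + Y (Fin.cons y u) * DY' x (Fin.cons z w)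
      + DY x (Fin.cons z u) * Y' (Fin.cons y w) + Y (Fin.cons z u) * DY' x (Fin.cons y w))

/-- The one-form `k_c = (2/p)(Y_c{}^{d₂…d_p} h̃_{d₂…d_p} + Ỹ_c{}^{d₂…d_p} h_{d₂…d_p})`. -/
noncomputable def kOneForm {ι : Type*} [Fintype ι] {q : ℕ} (ginv : ι → ι → ℝ)
    (Y Y' : (Fin (q + 1) → ι) → ℝ) (h h' : (Fin q → ι) → ℝ) (c : ι) : ℝ :=
  (2 / ((q : ℝ) + 1)) * ∑ u : Fin q → ι, ∑ w : Fin q → ι, (∏ i, ginv (u i) (w i)) *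
    (Y (Fin.cons c u) * h' w + Y' (Fin.cons c u) * h w)


noncomputable def dsum {ι : Type*} [Fintype ι] {q : ℕ} (ginv : ι → ι → ℝ)
    (f : (Fin q → ι) → (Fin q → ι) → ℝ) : ℝ :=
  ∑ u : Fin q → ι, ∑ w : Fin q → ι, (∏ i, ginv (u i) (w i)) * f u w

lemma dsum_congr {ι : Type*} [Fintype ι] {q : ℕ} (ginv : ι → ι → ℝ)
    {f f' : (Fin q → ι) → (Fin q → ι) → ℝ} (h : ∀ u w, f u w = f' u w) :
    dsum ginv f = dsum ginv f' := by
  unfold dsum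
  exact Finset.sum_congr rfl fun u _ => Finset.sum_congr rfl fun w _ => by rw [h]

lemma dsum_add {ι : Type*} [Fintype ι] {q : ℕ} (ginv : ι → ι → ℝ)
    (f g : (Fin q → ι) → (Fin q → ι) → ℝ) :
    dsum ginv (fun u w => f u w + g u w) = dsum ginv f + dsum ginv g := by
  unfold dsum
  rw [← Finset.sum_add_distrib]
  refine Finset.sum_congr rfl fun u _ => ?_
  rw [← Finset.sum_add_distrib]
  exact Finset.sum_congr rfl fun w _ => by ring

lemma dsum_smul {ι : Type*} [Fintype ι] {q : ℕ} (ginv : ι → ι → ℝ)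
    (c : ℝ) (f : (Fin q → ι) → (Fin q → ι) → ℝ) :
    dsum ginv (fun u w => c * f u w) = c * dsum ginv f := by
  unfold dsum
  rw [Finset.mul_sum]
  refine Finset.sum_congr rfl fun u _ => ?_
  rw [Finset.mul_sum]
  exact Finset.sum_congr rfl fun w _ => by ring

lemma dsum_add6 {ι : Type*} [Fintype ι] {q : ℕ} (ginv : ι → ι → ℝ)
    (f1 f2 f3 f4 f5 f6 : (Fin q → ι) → (Fin q → ι) → ℝ) :
    dsum ginv (fun u w => f1 u w + f2 u w + f3 u w + f4 u w + f5 u w + f6 u w)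
      = dsum ginv f1 + dsum ginv f2 + dsum ginv f3 + dsum ginv f4 + dsum ginv f5
        + dsum ginv f6 := by
  unfold dsum
  simp only [Finset.mul_sum, ← Finset.sum_add_distrib]
  exact Finset.sum_congr rfl fun u _ => Finset.sum_congr rfl fun w _ => by ring

lemma dsum_split6 {ι : Type*} [Fintype ι] {q : ℕ} (ginv : ι → ι → ℝ)
    (c1 c2 c3 c4 c5 c6 : ℝ) (f1 f2 f3 f4 f5 f6 : (Fin q → ι) → (Fin q → ι) → ℝ) :
    dsum ginv (fun u w => c1 * f1 u w + c2 * f2 u w + c3 * f3 u w + c4 * f4 u w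
        + c5 * f5 u w + c6 * f6 u w)
      = c1 * dsum ginv f1 + c2 * dsum ginv f2 + c3 * dsum ginv f3 + c4 * dsum ginv f4
        + c5 * dsum ginv f5 + c6 * dsum ginv f6 := by
  unfold dsum
  simp only [Finset.mul_sum, ← Finset.sum_add_distrib]
  exact Finset.sum_congr rfl fun u _ => Finset.sum_congr rfl fun w _ => by ring

lemma dsum_sum {ι : Type*} [Fintype ι] {q : ℕ} (ginv : ι → ι → ℝ)
    (F : Fin q → (Fin q → ι) → (Fin q → ι) → ℝ) :
    dsum ginv (fun u w => ∑ j, F j u w) = ∑ j, dsum ginv (F j) := by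
  unfold dsum
  simp only [Finset.mul_sum]
  calc (∑ u : Fin q → ι, ∑ w : Fin q → ι, ∑ j : Fin q,
          (∏ i, ginv (u i) (w i)) * F j u w)
      = ∑ u : Fin q → ι, ∑ j : Fin q, ∑ w : Fin q → ι,
          (∏ i, ginv (u i) (w i)) * F j u w :=
        Finset.sum_congr rfl fun u _ => Finset.sum_comm
    _ = ∑ j : Fin q, ∑ u : Fin q → ι, ∑ w : Fin q → ι,
          (∏ i, ginv (u i) (w i)) * F j u w := Finset.sum_comm

lemma dsum_swap {ι : Type*} [Fintype ι] {q : ℕ} {ginv : ι → ι → ℝ}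
    (hginvsymm : ∀ a b, ginv a b = ginv b a) (f : (Fin q → ι) → (Fin q → ι) → ℝ) :
    dsum ginv f = dsum ginv (fun u w => f w u) := by
  unfold dsum
  rw [Finset.sum_comm]
  refine Finset.sum_congr rfl fun u _ => Finset.sum_congr rfl fun w _ => ?_
  rw [Finset.prod_congr rfl fun i _ => hginvsymm (w i) (u i)]

lemma traceCancelD {ι : Type*} [Fintype ι] [DecidableEq ι] {q : ℕ} (g ginv : ι → ι → ℝ)
    (hgsymm : ∀ a b, g a b = g b a) (hginvsymm : ∀ a b, ginv a b = ginv b a)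
    (hinv : ∀ a b, ∑ c, ginv a c * g c b = if a = b then (1 : ℝ) else 0)
    (H : (Fin q → ι) → ℝ) {Z : (Fin (q + 1) → ι) → ℝ} (hZ : IsAlt Z)
    (j : Fin q) (x y z : ι) :
    dsum ginv (fun u w => g x (u j) * H (Function.update u j y) * Z (Fin.cons z w))
    + dsum ginv (fun u w => g z (u j) * H (Function.update u j y) * Z (Fin.cons x w))
      = 0 :=
  traceCancel g ginv hgsymm hginvsymm hinv H hZ j x y z

lemma pairDY {ι : Type*} {q : ℕ} (g : ι → ι → ℝ) {h : (Fin q → ι) → ℝ}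
    (hh : IsAlt h) {DY : ι → (Fin (q + 1) → ι) → ℝ}
    (hgsymm : ∀ a b, g a b = g b a)
    (hCKY : ∀ (a : ι) (v : Fin (q + 1) → ι),
      DY a v = alt (totalD DY) (Fin.cons a v) + 2 * ghAlt g h a v)
    (x y : ι) (u : Fin q → ι) :
    DY x (Fin.cons y u) + DY y (Fin.cons x u)
      = 4 * (((q : ℝ) + 1)⁻¹ * (g x y * h u))
        - 2 * (((q : ℝ) + 1)⁻¹ * ((∑ j, g x (u j) * h (Function.update u j y))
            + ∑ j, g y (u j) * h (Function.update u j x))) := by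
  rw [hCKY x, hCKY y]
  have h01 : (0 : Fin (q + 1 + 1)) ≠ 1 := by
    simp [Fin.ext_iff]
  have hsw : Fin.cons y (Fin.cons x u)
      = (Fin.cons x (Fin.cons y u)) ∘ (Equiv.swap (0 : Fin (q + 1 + 1)) 1) := by
    funext i
    refine Fin.cases ?_ (fun m => ?_) i
    · rw [Function.comp_apply, Equiv.swap_apply_left, ← Fin.succ_zero_eq_one,
        Fin.cons_succ, Fin.cons_zero, Fin.cons_zero]
    · refine Fin.cases ?_ (fun m' => ?_) m
      · rw [Function.comp_apply, Fin.succ_zero_eq_one, Equiv.swap_apply_right,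
          Fin.cons_zero, ← Fin.succ_zero_eq_one, Fin.cons_succ, Fin.cons_zero]
      · have hne1 : (m'.succ.succ : Fin (q + 1 + 1)) ≠ 1 := by
          rw [← Fin.succ_zero_eq_one]
          exact (Fin.succ_injective _).ne (Fin.succ_ne_zero m')
        have hfix : (Equiv.swap (0 : Fin (q + 1 + 1)) 1) m'.succ.succ = m'.succ.succ :=
          Equiv.swap_apply_of_ne_of_ne (Fin.succ_ne_zero _) hne1
        rw [Function.comp_apply, hfix, Fin.cons_succ, Fin.cons_succ, Fin.cons_succ,
          Fin.cons_succ]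
  have hcancel : alt (totalD DY) (Fin.cons x (Fin.cons y u))
      + alt (totalD DY) (Fin.cons y (Fin.cons x u)) = 0 := by
    rw [hsw, (isAlt_alt (totalD DY)).comp_swap h01]
    ring
  linear_combination hcancel + 2 * ghAlt_cons g hh x y u + 2 * ghAlt_cons g hh y x u
    + (2 * ((q : ℝ) + 1)⁻¹ * h u) * hgsymm y x

/-- If `Y`, `Ỹ` are CKY tensors of order `p = q+1` with associated
tensors `h`, `h̃`, then `K_{ab} = Y_{(a}{}^{c₂…c_p} Ỹ_{b)c₂…c_p}` is a conformal
Killing tensor of order two: `∇_{(a} K_{bc)} = g_{(ab} k_{c)}`, i.e.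
`∇_a K_{bc} + ∇_b K_{ca} + ∇_c K_{ab} = g_{ab} k_c + g_{bc} k_a + g_{ca} k_b`. -/
theorem statement2 {ι : Type*} [Fintype ι] [DecidableEq ι] {q : ℕ}
    (g ginv : ι → ι → ℝ)
    (hgsymm : ∀ a b, g a b = g b a) (hginvsymm : ∀ a b, ginv a b = ginv b a)
    (hinv : ∀ a b, ∑ c, ginv a c * g c b = if a = b then (1 : ℝ) else 0)
    (Y Y' : (Fin (q + 1) → ι) → ℝ) (hYalt : IsAlt Y) (hY'alt : IsAlt Y')
    (h h' : (Fin q → ι) → ℝ) (hhalt : IsAlt h) (hh'alt : IsAlt h')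
    (DY DY' : ι → (Fin (q + 1) → ι) → ℝ)
    (hDYalt : ∀ a, IsAlt (DY a)) (hDY'alt : ∀ a, IsAlt (DY' a))
    (hCKY : ∀ (a : ι) (v : Fin (q + 1) → ι),
      DY a v = alt (totalD DY) (Fin.cons a v) + 2 * ghAlt g h a v)
    (hCKY' : ∀ (a : ι) (v : Fin (q + 1) → ι),
      DY' a v = alt (totalD DY') (Fin.cons a v) + 2 * ghAlt g h' a v) :
    ∀ a b c : ι,
      gradK ginv Y Y' DY DY' a b c + gradK ginv Y Y' DY DY' b c a
          + gradK ginv Y Y' DY DY' c a b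
        = g a b * kOneForm ginv Y Y' h h' c + g b c * kOneForm ginv Y Y' h h' a
          + g c a * kOneForm ginv Y Y' h h' b := by
  intro a b c
  have hpair := fun x y u => pairDY g hhalt hgsymm hCKY x y u
  have hpair' := fun x y w => pairDY g hh'alt hgsymm hCKY' x y w
  have hgrad : ∀ x y z : ι, gradK ginv Y Y' DY DY' x y z
      = (1 / 2) * dsum ginv (fun u w =>
          DY x (Fin.cons y u) * Y' (Fin.cons z w) + Y (Fin.cons y u) * DY' x (Fin.cons z w)
          + DY x (Fin.cons z u) * Y' (Fin.cons y w) + Y (Fin.cons z u) * DY' x (Fin.cons y w)) :=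
    fun x y z => rfl
  have hk : ∀ z : ι, kOneForm ginv Y Y' h h' z
      = 2 * ((q : ℝ) + 1)⁻¹ * (dsum ginv (fun u w => Y (Fin.cons z u) * h' w)
          + dsum ginv (fun u w => h u * Y' (Fin.cons z w))) := by
    intro z
    have h0 : kOneForm ginv Y Y' h h' z
        = (2 / ((q : ℝ) + 1)) * dsum ginv (fun u w =>
            Y (Fin.cons z u) * h' w + Y' (Fin.cons z u) * h w) := rfl
    rw [h0, dsum_add ginv (fun u w => Y (Fin.cons z u) * h' w)
      (fun u w => Y' (Fin.cons z u) * h w)]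
    have h2 : dsum ginv (fun u w => Y' (Fin.cons z u) * h w)
        = dsum ginv (fun u w => h u * Y' (Fin.cons z w)) := by
      rw [dsum_swap hginvsymm (fun u w => Y' (Fin.cons z u) * h w)]
      exact dsum_congr ginv fun u w => by ring
    rw [h2, div_eq_mul_inv]
  rw [hgrad, hgrad, hgrad, hk, hk, hk]
  have hmerge : dsum ginv (fun u w =>
          DY a (Fin.cons b u) * Y' (Fin.cons c w) + Y (Fin.cons b u) * DY' a (Fin.cons c w)
          + DY a (Fin.cons c u) * Y' (Fin.cons b w) + Y (Fin.cons c u) * DY' a (Fin.cons b w)) +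
        dsum ginv (fun u w =>
          DY b (Fin.cons c u) * Y' (Fin.cons a w) + Y (Fin.cons c u) * DY' b (Fin.cons a w)
          + DY b (Fin.cons a u) * Y' (Fin.cons c w) + Y (Fin.cons a u) * DY' b (Fin.cons c w)) +
        dsum ginv (fun u w =>
          DY c (Fin.cons a u) * Y' (Fin.cons b w) + Y (Fin.cons a u) * DY' c (Fin.cons b w)
          + DY c (Fin.cons b u) * Y' (Fin.cons a w) + Y (Fin.cons b u) * DY' c (Fin.cons a w))
      = dsum ginv (fun u w =>
        (DY a (Fin.cons b u) + DY b (Fin.cons a u)) * Y' (Fin.cons c w)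
        + (DY b (Fin.cons c u) + DY c (Fin.cons b u)) * Y' (Fin.cons a w)
        + (DY c (Fin.cons a u) + DY a (Fin.cons c u)) * Y' (Fin.cons b w)
        + Y (Fin.cons c u) * (DY' a (Fin.cons b w) + DY' b (Fin.cons a w))
        + Y (Fin.cons a u) * (DY' b (Fin.cons c w) + DY' c (Fin.cons b w))
        + Y (Fin.cons b u) * (DY' c (Fin.cons a w) + DY' a (Fin.cons c w))) := by
    rw [← dsum_add ginv
        (fun u w =>
          DY a (Fin.cons b u) * Y' (Fin.cons c w) + Y (Fin.cons b u) * DY' a (Fin.cons c w)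
          + DY a (Fin.cons c u) * Y' (Fin.cons b w) + Y (Fin.cons c u) * DY' a (Fin.cons b w))
        (fun u w =>
          DY b (Fin.cons c u) * Y' (Fin.cons a w) + Y (Fin.cons c u) * DY' b (Fin.cons a w)
          + DY b (Fin.cons a u) * Y' (Fin.cons c w) + Y (Fin.cons a u) * DY' b (Fin.cons c w)),
      ← dsum_add ginv
        (fun u w =>
          (DY a (Fin.cons b u) * Y' (Fin.cons c w) + Y (Fin.cons b u) * DY' a (Fin.cons c w)
          + DY a (Fin.cons c u) * Y' (Fin.cons b w) + Y (Fin.cons c u) * DY' a (Fin.cons b w))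
          + (DY b (Fin.cons c u) * Y' (Fin.cons a w) + Y (Fin.cons c u) * DY' b (Fin.cons a w)
          + DY b (Fin.cons a u) * Y' (Fin.cons c w) + Y (Fin.cons a u) * DY' b (Fin.cons c w)))
        (fun u w =>
          DY c (Fin.cons a u) * Y' (Fin.cons b w) + Y (Fin.cons a u) * DY' c (Fin.cons b w)
          + DY c (Fin.cons b u) * Y' (Fin.cons a w) + Y (Fin.cons b u) * DY' c (Fin.cons a w))]
    exact dsum_congr ginv fun u w => by ring
  have hTT : ∀ (u w : Fin q → ι),
      (∑ j, (-(2 * ((q : ℝ) + 1)⁻¹)) * ((g a (u j) * h (Function.update u j b) + g b (u j) * h (Function.update u j a)) * Y' (Fin.cons c w)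
          + (g b (u j) * h (Function.update u j c) + g c (u j) * h (Function.update u j b)) * Y' (Fin.cons a w)
          + (g c (u j) * h (Function.update u j a) + g a (u j) * h (Function.update u j c)) * Y' (Fin.cons b w)
          + Y (Fin.cons c u) * (g a (w j) * h' (Function.update w j b) + g b (w j) * h' (Function.update w j a))
          + Y (Fin.cons a u) * (g b (w j) * h' (Function.update w j c) + g c (w j) * h' (Function.update w j b))
          + Y (Fin.cons b u) * (g c (w j) * h' (Function.update w j a) + g a (w j) * h' (Function.update w j c))))
      = (-(2 * ((q : ℝ) + 1)⁻¹)) * (((∑ j, g a (u j) * h (Function.update u j b)) + (∑ j, g b (u j) * h (Function.update u j a))) * Y' (Fin.cons c w)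
          + ((∑ j, g b (u j) * h (Function.update u j c)) + (∑ j, g c (u j) * h (Function.update u j b))) * Y' (Fin.cons a w)
          + ((∑ j, g c (u j) * h (Function.update u j a)) + (∑ j, g a (u j) * h (Function.update u j c))) * Y' (Fin.cons b w)
          + Y (Fin.cons c u) * ((∑ j, g a (w j) * h' (Function.update w j b)) + (∑ j, g b (w j) * h' (Function.update w j a)))
          + Y (Fin.cons a u) * ((∑ j, g b (w j) * h' (Function.update w j c)) + (∑ j, g c (w j) * h' (Function.update w j b)))
          + Y (Fin.cons b u) * ((∑ j, g c (w j) * h' (Function.update w j a)) + (∑ j, g a (w j) * h' (Function.update w j c)))) := by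
    intro u w
    have expand1 : ∀ (Z : ℝ) (A B : Fin q → ℝ), ((∑ j, A j) + ∑ j, B j) * Z
        = ∑ j, (A j + B j) * Z := by
      intro Z A B
      rw [add_mul, Finset.sum_mul, Finset.sum_mul, ← Finset.sum_add_distrib]
      exact Finset.sum_congr rfl fun j _ => by ring
    have expand2 : ∀ (Z : ℝ) (A B : Fin q → ℝ), Z * ((∑ j, A j) + ∑ j, B j)
        = ∑ j, Z * (A j + B j) := by
      intro Z A B
      rw [mul_add, Finset.mul_sum, Finset.mul_sum, ← Finset.sum_add_distrib]
      exact Finset.sum_congr rfl fun j _ => by ring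
    rw [expand1, expand1, expand1, expand2, expand2, expand2,
      ← Finset.sum_add_distrib, ← Finset.sum_add_distrib, ← Finset.sum_add_distrib,
      ← Finset.sum_add_distrib, ← Finset.sum_add_distrib, Finset.mul_sum]
  have hsub : dsum ginv (fun u w =>
        (DY a (Fin.cons b u) + DY b (Fin.cons a u)) * Y' (Fin.cons c w)
        + (DY b (Fin.cons c u) + DY c (Fin.cons b u)) * Y' (Fin.cons a w)
        + (DY c (Fin.cons a u) + DY a (Fin.cons c u)) * Y' (Fin.cons b w)
        + Y (Fin.cons c u) * (DY' a (Fin.cons b w) + DY' b (Fin.cons a w))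
        + Y (Fin.cons a u) * (DY' b (Fin.cons c w) + DY' c (Fin.cons b w))
        + Y (Fin.cons b u) * (DY' c (Fin.cons a w) + DY' a (Fin.cons c w)))
      = dsum ginv (fun u w =>
          ((4 * ((q : ℝ) + 1)⁻¹ * g a b) * (h u * Y' (Fin.cons c w))
        + (4 * ((q : ℝ) + 1)⁻¹ * g b c) * (h u * Y' (Fin.cons a w))
        + (4 * ((q : ℝ) + 1)⁻¹ * g c a) * (h u * Y' (Fin.cons b w))
        + (4 * ((q : ℝ) + 1)⁻¹ * g a b) * (Y (Fin.cons c u) * h' w)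
        + (4 * ((q : ℝ) + 1)⁻¹ * g b c) * (Y (Fin.cons a u) * h' w)
        + (4 * ((q : ℝ) + 1)⁻¹ * g c a) * (Y (Fin.cons b u) * h' w))
          + ∑ j, (-(2 * ((q : ℝ) + 1)⁻¹)) * ((g a (u j) * h (Function.update u j b) + g b (u j) * h (Function.update u j a)) * Y' (Fin.cons c w)
          + (g b (u j) * h (Function.update u j c) + g c (u j) * h (Function.update u j b)) * Y' (Fin.cons a w)
          + (g c (u j) * h (Function.update u j a) + g a (u j) * h (Function.update u j c)) * Y' (Fin.cons b w)
          + Y (Fin.cons c u) * (g a (w j) * h' (Function.update w j b) + g b (w j) * h' (Function.update w j a))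
          + Y (Fin.cons a u) * (g b (w j) * h' (Function.update w j c) + g c (w j) * h' (Function.update w j b))
          + Y (Fin.cons b u) * (g c (w j) * h' (Function.update w j a) + g a (w j) * h' (Function.update w j c)))) := by
    refine dsum_congr ginv fun u w => ?_
    rw [hpair a b u, hpair b c u, hpair c a u, hpair' a b w, hpair' b c w, hpair' c a w,
      hTT u w]
    ring
  have hsplit : dsum ginv (fun u w =>
          ((4 * ((q : ℝ) + 1)⁻¹ * g a b) * (h u * Y' (Fin.cons c w))
        + (4 * ((q : ℝ) + 1)⁻¹ * g b c) * (h u * Y' (Fin.cons a w))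
        + (4 * ((q : ℝ) + 1)⁻¹ * g c a) * (h u * Y' (Fin.cons b w))
        + (4 * ((q : ℝ) + 1)⁻¹ * g a b) * (Y (Fin.cons c u) * h' w)
        + (4 * ((q : ℝ) + 1)⁻¹ * g b c) * (Y (Fin.cons a u) * h' w)
        + (4 * ((q : ℝ) + 1)⁻¹ * g c a) * (Y (Fin.cons b u) * h' w))
          + ∑ j, (-(2 * ((q : ℝ) + 1)⁻¹)) * ((g a (u j) * h (Function.update u j b) + g b (u j) * h (Function.update u j a)) * Y' (Fin.cons c w)
          + (g b (u j) * h (Function.update u j c) + g c (u j) * h (Function.update u j b)) * Y' (Fin.cons a w)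
          + (g c (u j) * h (Function.update u j a) + g a (u j) * h (Function.update u j c)) * Y' (Fin.cons b w)
          + Y (Fin.cons c u) * (g a (w j) * h' (Function.update w j b) + g b (w j) * h' (Function.update w j a))
          + Y (Fin.cons a u) * (g b (w j) * h' (Function.update w j c) + g c (w j) * h' (Function.update w j b))
          + Y (Fin.cons b u) * (g c (w j) * h' (Function.update w j a) + g a (w j) * h' (Function.update w j c))))
      = dsum ginv (fun u w =>
          (4 * ((q : ℝ) + 1)⁻¹ * g a b) * (h u * Y' (Fin.cons c w))
        + (4 * ((q : ℝ) + 1)⁻¹ * g b c) * (h u * Y' (Fin.cons a w))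
        + (4 * ((q : ℝ) + 1)⁻¹ * g c a) * (h u * Y' (Fin.cons b w))
        + (4 * ((q : ℝ) + 1)⁻¹ * g a b) * (Y (Fin.cons c u) * h' w)
        + (4 * ((q : ℝ) + 1)⁻¹ * g b c) * (Y (Fin.cons a u) * h' w)
        + (4 * ((q : ℝ) + 1)⁻¹ * g c a) * (Y (Fin.cons b u) * h' w))
        + ∑ j, dsum ginv (fun u w => (-(2 * ((q : ℝ) + 1)⁻¹)) * ((g a (u j) * h (Function.update u j b) + g b (u j) * h (Function.update u j a)) * Y' (Fin.cons c w)
          + (g b (u j) * h (Function.update u j c) + g c (u j) * h (Function.update u j b)) * Y' (Fin.cons a w)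
          + (g c (u j) * h (Function.update u j a) + g a (u j) * h (Function.update u j c)) * Y' (Fin.cons b w)
          + Y (Fin.cons c u) * (g a (w j) * h' (Function.update w j b) + g b (w j) * h' (Function.update w j a))
          + Y (Fin.cons a u) * (g b (w j) * h' (Function.update w j c) + g c (w j) * h' (Function.update w j b))
          + Y (Fin.cons b u) * (g c (w j) * h' (Function.update w j a) + g a (w j) * h' (Function.update w j c)))) := by
    rw [dsum_add ginv
        (fun u w => (4 * ((q : ℝ) + 1)⁻¹ * g a b) * (h u * Y' (Fin.cons c w))
        + (4 * ((q : ℝ) + 1)⁻¹ * g b c) * (h u * Y' (Fin.cons a w))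
        + (4 * ((q : ℝ) + 1)⁻¹ * g c a) * (h u * Y' (Fin.cons b w))
        + (4 * ((q : ℝ) + 1)⁻¹ * g a b) * (Y (Fin.cons c u) * h' w)
        + (4 * ((q : ℝ) + 1)⁻¹ * g b c) * (Y (Fin.cons a u) * h' w)
        + (4 * ((q : ℝ) + 1)⁻¹ * g c a) * (Y (Fin.cons b u) * h' w))
        (fun u w => ∑ j, (-(2 * ((q : ℝ) + 1)⁻¹)) * ((g a (u j) * h (Function.update u j b) + g b (u j) * h (Function.update u j a)) * Y' (Fin.cons c w)
          + (g b (u j) * h (Function.update u j c) + g c (u j) * h (Function.update u j b)) * Y' (Fin.cons a w)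
          + (g c (u j) * h (Function.update u j a) + g a (u j) * h (Function.update u j c)) * Y' (Fin.cons b w)
          + Y (Fin.cons c u) * (g a (w j) * h' (Function.update w j b) + g b (w j) * h' (Function.update w j a))
          + Y (Fin.cons a u) * (g b (w j) * h' (Function.update w j c) + g c (w j) * h' (Function.update w j b))
          + Y (Fin.cons b u) * (g c (w j) * h' (Function.update w j a) + g a (w j) * h' (Function.update w j c)))),
      dsum_sum ginv (fun j u w => (-(2 * ((q : ℝ) + 1)⁻¹)) * ((g a (u j) * h (Function.update u j b) + g b (u j) * h (Function.update u j a)) * Y' (Fin.cons c w)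
          + (g b (u j) * h (Function.update u j c) + g c (u j) * h (Function.update u j b)) * Y' (Fin.cons a w)
          + (g c (u j) * h (Function.update u j a) + g a (u j) * h (Function.update u j c)) * Y' (Fin.cons b w)
          + Y (Fin.cons c u) * (g a (w j) * h' (Function.update w j b) + g b (w j) * h' (Function.update w j a))
          + Y (Fin.cons a u) * (g b (w j) * h' (Function.update w j c) + g c (w j) * h' (Function.update w j b))
          + Y (Fin.cons b u) * (g c (w j) * h' (Function.update w j a) + g a (w j) * h' (Function.update w j c))))]
  have hgpart : dsum ginv (fun u w =>
          (4 * ((q : ℝ) + 1)⁻¹ * g a b) * (h u * Y' (Fin.cons c w))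
        + (4 * ((q : ℝ) + 1)⁻¹ * g b c) * (h u * Y' (Fin.cons a w))
        + (4 * ((q : ℝ) + 1)⁻¹ * g c a) * (h u * Y' (Fin.cons b w))
        + (4 * ((q : ℝ) + 1)⁻¹ * g a b) * (Y (Fin.cons c u) * h' w)
        + (4 * ((q : ℝ) + 1)⁻¹ * g b c) * (Y (Fin.cons a u) * h' w)
        + (4 * ((q : ℝ) + 1)⁻¹ * g c a) * (Y (Fin.cons b u) * h' w))
      = (4 * ((q : ℝ) + 1)⁻¹ * g a b) * dsum ginv (fun u w => h u * Y' (Fin.cons c w))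
        + (4 * ((q : ℝ) + 1)⁻¹ * g b c) * dsum ginv (fun u w => h u * Y' (Fin.cons a w))
        + (4 * ((q : ℝ) + 1)⁻¹ * g c a) * dsum ginv (fun u w => h u * Y' (Fin.cons b w))
        + (4 * ((q : ℝ) + 1)⁻¹ * g a b) * dsum ginv (fun u w => Y (Fin.cons c u) * h' w)
        + (4 * ((q : ℝ) + 1)⁻¹ * g b c) * dsum ginv (fun u w => Y (Fin.cons a u) * h' w)
        + (4 * ((q : ℝ) + 1)⁻¹ * g c a) * dsum ginv (fun u w => Y (Fin.cons b u) * h' w) :=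
    dsum_split6 ginv _ _ _ _ _ _
      (fun u w => h u * Y' (Fin.cons c w)) (fun u w => h u * Y' (Fin.cons a w))
      (fun u w => h u * Y' (Fin.cons b w)) (fun u w => Y (Fin.cons c u) * h' w)
      (fun u w => Y (Fin.cons a u) * h' w) (fun u w => Y (Fin.cons b u) * h' w)
  have htrace : ∀ j : Fin q, dsum ginv (fun u w => (-(2 * ((q : ℝ) + 1)⁻¹)) * ((g a (u j) * h (Function.update u j b) + g b (u j) * h (Function.update u j a)) * Y' (Fin.cons c w)
          + (g b (u j) * h (Function.update u j c) + g c (u j) * h (Function.update u j b)) * Y' (Fin.cons a w)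
          + (g c (u j) * h (Function.update u j a) + g a (u j) * h (Function.update u j c)) * Y' (Fin.cons b w)
          + Y (Fin.cons c u) * (g a (w j) * h' (Function.update w j b) + g b (w j) * h' (Function.update w j a))
          + Y (Fin.cons a u) * (g b (w j) * h' (Function.update w j c) + g c (w j) * h' (Function.update w j b))
          + Y (Fin.cons b u) * (g c (w j) * h' (Function.update w j a) + g a (w j) * h' (Function.update w j c)))) = 0 := by
    intro j
    have c1 : dsum ginv (fun u w => (-(2 * ((q : ℝ) + 1)⁻¹)) * ((g a (u j) * h (Function.update u j b) + g b (u j) * h (Function.update u j a)) * Y' (Fin.cons c w)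
          + (g b (u j) * h (Function.update u j c) + g c (u j) * h (Function.update u j b)) * Y' (Fin.cons a w)
          + (g c (u j) * h (Function.update u j a) + g a (u j) * h (Function.update u j c)) * Y' (Fin.cons b w)
          + Y (Fin.cons c u) * (g a (w j) * h' (Function.update w j b) + g b (w j) * h' (Function.update w j a))
          + Y (Fin.cons a u) * (g b (w j) * h' (Function.update w j c) + g c (w j) * h' (Function.update w j b))
          + Y (Fin.cons b u) * (g c (w j) * h' (Function.update w j a) + g a (w j) * h' (Function.update w j c))))
        = (-(2 * ((q : ℝ) + 1)⁻¹)) * dsum ginv (fun u w => (g a (u j) * h (Function.update u j b) + g b (u j) * h (Function.update u j a)) * Y' (Fin.cons c w)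
          + (g b (u j) * h (Function.update u j c) + g c (u j) * h (Function.update u j b)) * Y' (Fin.cons a w)
          + (g c (u j) * h (Function.update u j a) + g a (u j) * h (Function.update u j c)) * Y' (Fin.cons b w)
          + Y (Fin.cons c u) * (g a (w j) * h' (Function.update w j b) + g b (w j) * h' (Function.update w j a))
          + Y (Fin.cons a u) * (g b (w j) * h' (Function.update w j c) + g c (w j) * h' (Function.update w j b))
          + Y (Fin.cons b u) * (g c (w j) * h' (Function.update w j a) + g a (w j) * h' (Function.update w j c))) := by
      rw [← dsum_smul ginv (-(2 * ((q : ℝ) + 1)⁻¹)) (fun u w => (g a (u j) * h (Function.update u j b) + g b (u j) * h (Function.update u j a)) * Y' (Fin.cons c w)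
          + (g b (u j) * h (Function.update u j c) + g c (u j) * h (Function.update u j b)) * Y' (Fin.cons a w)
          + (g c (u j) * h (Function.update u j a) + g a (u j) * h (Function.update u j c)) * Y' (Fin.cons b w)
          + Y (Fin.cons c u) * (g a (w j) * h' (Function.update w j b) + g b (w j) * h' (Function.update w j a))
          + Y (Fin.cons a u) * (g b (w j) * h' (Function.update w j c) + g c (w j) * h' (Function.update w j b))
          + Y (Fin.cons b u) * (g c (w j) * h' (Function.update w j a) + g a (w j) * h' (Function.update w j c)))]
    have c2 : dsum ginv (fun u w => (g a (u j) * h (Function.update u j b) + g b (u j) * h (Function.update u j a)) * Y' (Fin.cons c w)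
          + (g b (u j) * h (Function.update u j c) + g c (u j) * h (Function.update u j b)) * Y' (Fin.cons a w)
          + (g c (u j) * h (Function.update u j a) + g a (u j) * h (Function.update u j c)) * Y' (Fin.cons b w)
          + Y (Fin.cons c u) * (g a (w j) * h' (Function.update w j b) + g b (w j) * h' (Function.update w j a))
          + Y (Fin.cons a u) * (g b (w j) * h' (Function.update w j c) + g c (w j) * h' (Function.update w j b))
          + Y (Fin.cons b u) * (g c (w j) * h' (Function.update w j a) + g a (w j) * h' (Function.update w j c)))
        = dsum ginv (fun u w =>
            g a (u j) * h (Function.update u j b) * Y' (Fin.cons c w)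
            + g b (u j) * h (Function.update u j a) * Y' (Fin.cons c w)
            + g b (u j) * h (Function.update u j c) * Y' (Fin.cons a w)
            + g c (u j) * h (Function.update u j b) * Y' (Fin.cons a w)
            + g c (u j) * h (Function.update u j a) * Y' (Fin.cons b w)
            + g a (u j) * h (Function.update u j c) * Y' (Fin.cons b w))
          + dsum ginv (fun u w =>
            Y (Fin.cons c u) * (g a (w j) * h' (Function.update w j b))
            + Y (Fin.cons c u) * (g b (w j) * h' (Function.update w j a))
            + Y (Fin.cons a u) * (g b (w j) * h' (Function.update w j c))
            + Y (Fin.cons a u) * (g c (w j) * h' (Function.update w j b))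
            + Y (Fin.cons b u) * (g c (w j) * h' (Function.update w j a))
            + Y (Fin.cons b u) * (g a (w j) * h' (Function.update w j c))) := by
      rw [← dsum_add ginv
          (fun u w =>
            g a (u j) * h (Function.update u j b) * Y' (Fin.cons c w)
            + g b (u j) * h (Function.update u j a) * Y' (Fin.cons c w)
            + g b (u j) * h (Function.update u j c) * Y' (Fin.cons a w)
            + g c (u j) * h (Function.update u j b) * Y' (Fin.cons a w)
            + g c (u j) * h (Function.update u j a) * Y' (Fin.cons b w)
            + g a (u j) * h (Function.update u j c) * Y' (Fin.cons b w))
          (fun u w =>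
            Y (Fin.cons c u) * (g a (w j) * h' (Function.update w j b))
            + Y (Fin.cons c u) * (g b (w j) * h' (Function.update w j a))
            + Y (Fin.cons a u) * (g b (w j) * h' (Function.update w j c))
            + Y (Fin.cons a u) * (g c (w j) * h' (Function.update w j b))
            + Y (Fin.cons b u) * (g c (w j) * h' (Function.update w j a))
            + Y (Fin.cons b u) * (g a (w j) * h' (Function.update w j c)))]
      exact dsum_congr ginv fun u w => by ring
    have c3 : dsum ginv (fun u w =>
            Y (Fin.cons c u) * (g a (w j) * h' (Function.update w j b))
            + Y (Fin.cons c u) * (g b (w j) * h' (Function.update w j a))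
            + Y (Fin.cons a u) * (g b (w j) * h' (Function.update w j c))
            + Y (Fin.cons a u) * (g c (w j) * h' (Function.update w j b))
            + Y (Fin.cons b u) * (g c (w j) * h' (Function.update w j a))
            + Y (Fin.cons b u) * (g a (w j) * h' (Function.update w j c)))
        = dsum ginv (fun u w =>
            g a (u j) * h' (Function.update u j b) * Y (Fin.cons c w)
            + g b (u j) * h' (Function.update u j a) * Y (Fin.cons c w)
            + g b (u j) * h' (Function.update u j c) * Y (Fin.cons a w)
            + g c (u j) * h' (Function.update u j b) * Y (Fin.cons a w)
            + g c (u j) * h' (Function.update u j a) * Y (Fin.cons b w)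
            + g a (u j) * h' (Function.update u j c) * Y (Fin.cons b w)) := by
      rw [dsum_swap hginvsymm (fun u w =>
            Y (Fin.cons c u) * (g a (w j) * h' (Function.update w j b))
            + Y (Fin.cons c u) * (g b (w j) * h' (Function.update w j a))
            + Y (Fin.cons a u) * (g b (w j) * h' (Function.update w j c))
            + Y (Fin.cons a u) * (g c (w j) * h' (Function.update w j b))
            + Y (Fin.cons b u) * (g c (w j) * h' (Function.update w j a))
            + Y (Fin.cons b u) * (g a (w j) * h' (Function.update w j c)))]
      exact dsum_congr ginv fun u w => by ring
    have s1 : dsum ginv (fun u w =>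
            g a (u j) * h (Function.update u j b) * Y' (Fin.cons c w)
            + g b (u j) * h (Function.update u j a) * Y' (Fin.cons c w)
            + g b (u j) * h (Function.update u j c) * Y' (Fin.cons a w)
            + g c (u j) * h (Function.update u j b) * Y' (Fin.cons a w)
            + g c (u j) * h (Function.update u j a) * Y' (Fin.cons b w)
            + g a (u j) * h (Function.update u j c) * Y' (Fin.cons b w))
        = dsum ginv (fun u w => g a (u j) * h (Function.update u j b) * Y' (Fin.cons c w))
          + dsum ginv (fun u w => g b (u j) * h (Function.update u j a) * Y' (Fin.cons c w))
          + dsum ginv (fun u w => g b (u j) * h (Function.update u j c) * Y' (Fin.cons a w))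
          + dsum ginv (fun u w => g c (u j) * h (Function.update u j b) * Y' (Fin.cons a w))
          + dsum ginv (fun u w => g c (u j) * h (Function.update u j a) * Y' (Fin.cons b w))
          + dsum ginv (fun u w => g a (u j) * h (Function.update u j c) * Y' (Fin.cons b w)) :=
      dsum_add6 ginv (fun u w => g a (u j) * h (Function.update u j b) * Y' (Fin.cons c w)) (fun u w => g b (u j) * h (Function.update u j a) * Y' (Fin.cons c w)) (fun u w => g b (u j) * h (Function.update u j c) * Y' (Fin.cons a w)) (fun u w => g c (u j) * h (Function.update u j b) * Y' (Fin.cons a w)) (fun u w => g c (u j) * h (Function.update u j a) * Y' (Fin.cons b w)) (fun u w => g a (u j) * h (Function.update u j c) * Y' (Fin.cons b w))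
    have s2 : dsum ginv (fun u w =>
            g a (u j) * h' (Function.update u j b) * Y (Fin.cons c w)
            + g b (u j) * h' (Function.update u j a) * Y (Fin.cons c w)
            + g b (u j) * h' (Function.update u j c) * Y (Fin.cons a w)
            + g c (u j) * h' (Function.update u j b) * Y (Fin.cons a w)
            + g c (u j) * h' (Function.update u j a) * Y (Fin.cons b w)
            + g a (u j) * h' (Function.update u j c) * Y (Fin.cons b w))
        = dsum ginv (fun u w => g a (u j) * h' (Function.update u j b) * Y (Fin.cons c w))
          + dsum ginv (fun u w => g b (u j) * h' (Function.update u j a) * Y (Fin.cons c w))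
          + dsum ginv (fun u w => g b (u j) * h' (Function.update u j c) * Y (Fin.cons a w))
          + dsum ginv (fun u w => g c (u j) * h' (Function.update u j b) * Y (Fin.cons a w))
          + dsum ginv (fun u w => g c (u j) * h' (Function.update u j a) * Y (Fin.cons b w))
          + dsum ginv (fun u w => g a (u j) * h' (Function.update u j c) * Y (Fin.cons b w)) :=
      dsum_add6 ginv (fun u w => g a (u j) * h' (Function.update u j b) * Y (Fin.cons c w)) (fun u w => g b (u j) * h' (Function.update u j a) * Y (Fin.cons c w)) (fun u w => g b (u j) * h' (Function.update u j c) * Y (Fin.cons a w)) (fun u w => g c (u j) * h' (Function.update u j b) * Y (Fin.cons a w)) (fun u w => g c (u j) * h' (Function.update u j a) * Y (Fin.cons b w)) (fun u w => g a (u j) * h' (Function.update u j c) * Y (Fin.cons b w))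
    have tc1 := traceCancelD g ginv hgsymm hginvsymm hinv h hY'alt j a b c
    have tc2 := traceCancelD g ginv hgsymm hginvsymm hinv h hY'alt j b a c
    have tc3 := traceCancelD g ginv hgsymm hginvsymm hinv h hY'alt j b c a
    have tc4 := traceCancelD g ginv hgsymm hginvsymm hinv h' hYalt j a b c
    have tc5 := traceCancelD g ginv hgsymm hginvsymm hinv h' hYalt j b a c
    have tc6 := traceCancelD g ginv hgsymm hginvsymm hinv h' hYalt j b c a
    rw [c1, c2, c3, s1, s2]
    linear_combination (-(2 * ((q : ℝ) + 1)⁻¹)) * (tc1 + tc2 + tc3 + tc4 + tc5 + tc6)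
  have hTR : (∑ j, dsum ginv (fun u w => (-(2 * ((q : ℝ) + 1)⁻¹)) * ((g a (u j) * h (Function.update u j b) + g b (u j) * h (Function.update u j a)) * Y' (Fin.cons c w)
          + (g b (u j) * h (Function.update u j c) + g c (u j) * h (Function.update u j b)) * Y' (Fin.cons a w)
          + (g c (u j) * h (Function.update u j a) + g a (u j) * h (Function.update u j c)) * Y' (Fin.cons b w)
          + Y (Fin.cons c u) * (g a (w j) * h' (Function.update w j b) + g b (w j) * h' (Function.update w j a))
          + Y (Fin.cons a u) * (g b (w j) * h' (Function.update w j c) + g c (w j) * h' (Function.update w j b))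
          + Y (Fin.cons b u) * (g c (w j) * h' (Function.update w j a) + g a (w j) * h' (Function.update w j c))))) = 0 :=
    Finset.sum_eq_zero fun j _ => htrace j
  linear_combination (1/2 : ℝ) * hmerge + (1/2 : ℝ) * hsub + (1/2 : ℝ) * hsplit
    + (1/2 : ℝ) * hgpart + (1/2 : ℝ) * hTR
end

section
/- If Y is a conformal Killing-Yano tensor of order 2 on an n-dimensional pseudo-Riemannian manifold (n > 2), with associated one-form h (so ∇_a Y_{bc} = ∇_{[a} Y_{bc]} + 2 g_{a[b} h_{c]}), then ∇_c h_d + ∇_d h_c = (2/(n−2)) (R^f{}_c Y_{df} + R^f{}_d Y_{cf}) / 1, where R^f{}_c is the Ricci tensor; equivalently S_{cd} = (2/(n−2)) R^f{}_{(c} Y_{d)f} where S_{cd} := ∇_c h_d + ∇_d h_c. -/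
open Finset

/-- Let `Y` be a conformal Killing–Yano tensor of order 2 on an
`n`-dimensional pseudo-Riemannian manifold with `n > 2`, with associated one-form
`h` (so `∇_a Y_{bc} = ∇_{[a} Y_{bc]} + 2 g_{a[b} h_{c]}`).  With `D = ∇Y`,
`Dh = ∇h`, `DDY = ∇∇Y` subject to the differentiated CKY equation and the Ricci
identity, and `Ric` the Ricci tensor of the Riemann tensor `Riem`, one has
`S_{cd} := ∇_c h_d + ∇_d h_c = (2/(n−2)) R^f{}_{(c} Y_{d)f}`. -/
theorem statement7 {ι : Type*} [Fintype ι] [DecidableEq ι]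
    (hdim : 2 < Fintype.card ι)
    (g ginv : ι → ι → ℝ)
    (hgsymm : ∀ a b, g a b = g b a) (hginvsymm : ∀ a b, ginv a b = ginv b a)
    (hinv : ∀ a b, ∑ c, ginv a c * g c b = if a = b then (1 : ℝ) else 0)
    (Y : ι → ι → ℝ) (hYalt : ∀ a b, Y a b = -Y b a)
    (h : ι → ℝ) (D : ι → ι → ι → ℝ) (hDalt : ∀ a b c, D a b c = -D a c b)
    (Dh : ι → ι → ℝ) (DDY : ι → ι → ι → ι → ℝ)
    (Riem : ι → ι → ι → ι → ℝ) (Ric : ι → ι → ℝ)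
    (hCKY : ∀ a b c, D a b c
      = (1 / 3) * (D a b c + D b c a + D c a b) + g a b * h c - g a c * h b)
    (hDCKY : ∀ a b c d, DDY a b c d
      = (1 / 3) * (DDY a b c d + DDY a c d b + DDY a d b c)
        + g b c * Dh a d - g b d * Dh a c)
    (hRicciId : ∀ a b c d, DDY a b c d - DDY b a c d
      = ∑ e, ∑ f, ginv e f * (Riem a b c e * Y f d + Riem a b d e * Y c f))
    (hRiemAsym₁ : ∀ a b c d, Riem a b c d = -Riem b a c d)
    (hRiemAsym₂ : ∀ a b c d, Riem a b c d = -Riem a b d c)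
    (hRiemPair : ∀ a b c d, Riem a b c d = Riem c d a b)
    (hBianchi : ∀ a b c d, Riem a b c d + Riem b c a d + Riem c a b d = 0)
    (hRic : ∀ a b, Ric a b = ∑ c, ∑ d, ginv c d * Riem c a d b) :
    ∀ c d, Dh c d + Dh d c
      = (2 / ((Fintype.card ι : ℝ) - 2)) *
          ((1 / 2) * (∑ e, ∑ f, ginv e f * (Ric e c * Y d f + Ric e d * Y c f))) := by
  set n : ℝ := (Fintype.card ι : ℝ) with hn_def
  have hn : (2:ℝ) < n := by rw [hn_def]; exact_mod_cast hdim
  -- auxiliary definitions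
  obtain ⟨A, hA_def⟩ : ∃ A : ι → ι → ι → ι → ℝ, ∀ a b c d,
      A a b c d = DDY a b c d - g b c * Dh a d + g b d * Dh a c :=
    ⟨_, fun _ _ _ _ => rfl⟩
  obtain ⟨u, hu_def⟩ : ∃ u : ι → ι → ℝ, ∀ p q,
      u p q = ∑ a, ∑ x, ginv a x * A a x p q := ⟨_, fun _ _ => rfl⟩
  obtain ⟨m, hm_def⟩ : ∃ m : ι → ι → ℝ, ∀ p q,
      m p q = ∑ a, ∑ x, ginv a x * A p a x q := ⟨_, fun _ _ => rfl⟩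
  obtain ⟨phi, hphi_def⟩ : ∃ p : ℝ, p = ∑ a, ∑ x, ginv a x * Dh a x := ⟨_, rfl⟩
  obtain ⟨K, hK_def⟩ : ∃ K : ι → ι → ℝ, ∀ p q,
      K p q = ∑ e, ∑ f, ginv e f * (Ric p e * Y f q) := ⟨_, fun _ _ => rfl⟩
  obtain ⟨B, hB_def⟩ : ∃ B : ι → ι → ℝ, ∀ p q,
      B p q = ∑ a, ∑ x, ginv a x * ∑ e, ∑ f, ginv e f * (Riem a p q e * Y x f) :=
    ⟨_, fun _ _ => rfl⟩
  obtain ⟨Yup, hYup_def⟩ : ∃ Z : ι → ι → ℝ, ∀ p q,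
      Z p q = ∑ x, ∑ f, ginv p x * (ginv q f * Y x f) := ⟨_, fun _ _ => rfl⟩
  -- cyclicity of A
  have hAcyc : ∀ a b c d, A a b c d = A a c d b := by
    intro a b c d
    have h1 := hDCKY a b c d
    have h2 := hDCKY a c d b
    rw [hA_def, hA_def]
    linarith
  -- generic sum helpers
  have swap2 : ∀ F : ι → ι → ℝ,
      (∑ a, ∑ x, ginv a x * F a x) = ∑ a, ∑ x, ginv a x * F x a := by
    intro F
    rw [Finset.sum_comm]
    exact Finset.sum_congr rfl fun x _ => Finset.sum_congr rfl fun y _ => by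
      rw [hginvsymm x y]
  have contrR : ∀ (b : ι) (X : ι → ℝ),
      (∑ a, ∑ x, ginv a x * (g b x * X a)) = X b := by
    intro b X
    have h1 : ∀ a, (∑ x, ginv a x * (g b x * X a)) = (if a = b then (1:ℝ) else 0) * X a := by
      intro a
      rw [← hinv a b, Finset.sum_mul]
      exact Finset.sum_congr rfl fun x _ => by rw [hgsymm b x]; ring
    rw [Finset.sum_congr rfl fun a _ => h1 a]
    simp
  have contrL : ∀ (d : ι) (X : ι → ℝ),
      (∑ a, ∑ x, ginv a x * (g a d * X x)) = X d := by
    intro d X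
    rw [Finset.sum_comm]
    have h1 : ∀ x, (∑ a, ginv a x * (g a d * X x)) = (if x = d then (1:ℝ) else 0) * X x := by
      intro x
      rw [← hinv x d, Finset.sum_mul]
      exact Finset.sum_congr rfl fun a _ => by rw [hginvsymm a x, hgsymm a d]; ring
    rw [Finset.sum_congr rfl fun x _ => h1 x]
    simp
  have trg : (∑ a, ∑ x, ginv a x * g a x) = n := by
    have h1 : ∀ a, (∑ x, ginv a x * g a x) = 1 := by
      intro a
      have h2 := hinv a a
      simp at h2
      rw [← h2]
      exact Finset.sum_congr rfl fun x _ => by rw [hgsymm a x]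
    rw [Finset.sum_congr rfl fun a _ => h1 a]
    simp [hn_def, Finset.card_univ]
  have pullk : ∀ (k : ℝ) (F : ι → ι → ℝ),
      (∑ a, ∑ x, ginv a x * (k * F a x)) = k * ∑ a, ∑ x, ginv a x * F a x := by
    intro k F
    rw [Finset.mul_sum]
    refine Finset.sum_congr rfl fun a _ => ?_
    rw [Finset.mul_sum]
    exact Finset.sum_congr rfl fun x _ => by ring
  have pullR : ∀ (k : ℝ) (F : ι → ι → ℝ),
      (∑ a, ∑ x, ginv a x * (F a x * k)) = (∑ a, ∑ x, ginv a x * F a x) * k := by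
    intro k F
    rw [Finset.sum_mul]
    refine Finset.sum_congr rfl fun a _ => ?_
    rw [Finset.sum_mul]
    exact Finset.sum_congr rfl fun x _ => by ring
  have sum4_comm : ∀ P : ι → ι → ι → ι → ℝ,
      (∑ a, ∑ x, ∑ e, ∑ f, P a x e f) = ∑ e, ∑ f, ∑ a, ∑ x, P a x e f := by
    intro P
    have h1 : ∀ a, (∑ x, ∑ e, ∑ f, P a x e f) = ∑ e, ∑ f, ∑ x, P a x e f := by
      intro a
      rw [Finset.sum_comm]
      exact Finset.sum_congr rfl fun e _ => Finset.sum_comm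
    rw [Finset.sum_congr rfl fun a _ => h1 a]
    rw [Finset.sum_comm]
    exact Finset.sum_congr rfl fun e _ => Finset.sum_comm
  have flat4 : ∀ T : ι → ι → ι → ι → ℝ,
      (∑ a, ∑ x, ginv a x * ∑ e, ∑ f, ginv e f * T a x e f)
      = ∑ a, ∑ x, ∑ e, ∑ f, ginv a x * (ginv e f * T a x e f) := by
    intro T
    refine Finset.sum_congr rfl fun a _ => Finset.sum_congr rfl fun x _ => ?_
    rw [Finset.mul_sum]
    exact Finset.sum_congr rfl fun e _ => by rw [Finset.mul_sum]
  have fub : ∀ T : ι → ι → ι → ι → ℝ,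
      (∑ a, ∑ x, ginv a x * ∑ e, ∑ f, ginv e f * T a x e f)
      = ∑ e, ∑ f, ginv e f * ∑ a, ∑ x, ginv a x * T a x e f := by
    intro T
    rw [flat4, sum4_comm]
    refine Finset.sum_congr rfl fun e _ => Finset.sum_congr rfl fun f _ => ?_
    rw [Finset.mul_sum]
    refine Finset.sum_congr rfl fun a _ => ?_
    rw [Finset.mul_sum]
    exact Finset.sum_congr rfl fun x _ => by ring
  have neg4 : ∀ T : ι → ι → ι → ι → ℝ,
      (∑ a, ∑ x, ginv a x * ∑ e, ∑ f, ginv e f * (- T a x e f))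
      = -(∑ a, ∑ x, ginv a x * ∑ e, ∑ f, ginv e f * T a x e f) := by
    intro T
    simp [mul_neg, Finset.sum_neg_distrib]
  have split4 : ∀ T U : ι → ι → ι → ι → ℝ,
      (∑ a, ∑ x, ginv a x * ∑ e, ∑ f, ginv e f * (T a x e f + U a x e f))
      = (∑ a, ∑ x, ginv a x * ∑ e, ∑ f, ginv e f * T a x e f)
        + ∑ a, ∑ x, ginv a x * ∑ e, ∑ f, ginv e f * U a x e f := by
    intro T U
    simp [mul_add, Finset.sum_add_distrib]
  have neg2 : ∀ F : ι → ι → ℝ, (∑ a, ∑ x, -F a x) = -(∑ a, ∑ x, F a x) := by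
    intro F; simp [Finset.sum_neg_distrib]
  have split2 : ∀ F G : ι → ι → ℝ,
      (∑ a, ∑ x, (F a x + G a x)) = (∑ a, ∑ x, F a x) + ∑ a, ∑ x, G a x := by
    intro F G; simp [Finset.sum_add_distrib]
  have split2s : ∀ F G : ι → ι → ℝ,
      (∑ a, ∑ x, (F a x - G a x)) = (∑ a, ∑ x, F a x) - ∑ a, ∑ x, G a x := by
    intro F G; simp [Finset.sum_sub_distrib]
  -- Ricci symmetric
  have hRicS : ∀ a b, Ric a b = Ric b a := by
    intro a b
    rw [hRic a b, hRic b a]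
    calc (∑ x, ∑ y, ginv x y * Riem x a y b)
        = ∑ x, ∑ y, ginv x y * Riem y b x a :=
          Finset.sum_congr rfl fun x _ => Finset.sum_congr rfl fun y _ => by
            rw [hRiemPair x a y b]
      _ = ∑ x, ∑ y, ginv x y * Riem x b y a := swap2 _
  have hRicContr : ∀ b e, (∑ a, ∑ x, ginv a x * Riem a b x e) = Ric b e :=
    fun b e => (hRic b e).symm
  -- the K computation
  have hKcomp : ∀ b d, (∑ a, ∑ x, ginv a x * ∑ e, ∑ f, ginv e f * (Riem a b x e * Y f d))
      = K b d := by
    intro b d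
    rw [fub]
    rw [hK_def]
    refine Finset.sum_congr rfl fun e _ => Finset.sum_congr rfl fun f _ => ?_
    congr 1
    rw [pullR, hRicContr]

  have pullR2 : ∀ (k : ℝ) (F : ι → ι → ℝ),
      (∑ a, ∑ x, F a x * k) = (∑ a, ∑ x, F a x) * k := by
    intro k F; simp [Finset.sum_mul]
  -- B in raised form, and its symmetry
  have hBalt : ∀ b d, B b d = ∑ a, ∑ e, Riem a b d e * Yup a e := by
    intro b d
    rw [hB_def, flat4]
    refine Finset.sum_congr rfl fun a _ => ?_
    rw [Finset.sum_comm]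
    refine Finset.sum_congr rfl fun e _ => ?_
    rw [hYup_def, Finset.mul_sum]
    refine Finset.sum_congr rfl fun x _ => ?_
    rw [Finset.mul_sum]
    exact Finset.sum_congr rfl fun f _ => by ring
  have hYupAlt : ∀ a e, Yup e a = -Yup a e := by
    intro a e
    rw [hYup_def, hYup_def]
    rw [Finset.sum_comm, ← neg2]
    refine Finset.sum_congr rfl fun x _ => Finset.sum_congr rfl fun f _ => ?_
    rw [hYalt f x]
    ring
  have hB2 : ∀ b d, 2 * B b d = -(∑ a, ∑ e, Riem b d a e * Yup a e) := by
    intro b d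
    have e2 : (∑ a, ∑ e, Riem d a b e * Yup a e) = B b d := by
      rw [hBalt]
      calc (∑ a, ∑ e, Riem d a b e * Yup a e)
          = ∑ a, ∑ e, Riem b e d a * Yup a e :=
            Finset.sum_congr rfl fun a _ => Finset.sum_congr rfl fun e _ => by
              rw [hRiemPair d a b e]
        _ = ∑ a, ∑ e, Riem b a d e * Yup e a := Finset.sum_comm
        _ = ∑ a, ∑ e, Riem a b d e * Yup a e :=
            Finset.sum_congr rfl fun a _ => Finset.sum_congr rfl fun e _ => by
              rw [hYupAlt a e, hRiemAsym₁ a b d e]; ring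
    have e1 : B b d = (∑ a, ∑ e, -(Riem b d a e * Yup a e))
        + ∑ a, ∑ e, -(Riem d a b e * Yup a e) := by
      rw [hBalt, ← split2]
      refine Finset.sum_congr rfl fun a _ => Finset.sum_congr rfl fun e _ => ?_
      have hb := hBianchi a b d e
      have hcyc : Riem a b d e = -Riem b d a e - Riem d a b e := by linarith
      rw [hcyc]; ring
    rw [neg2, neg2] at e1
    linarith
  have hBsym : ∀ b d, B b d + B d b = 0 := by
    intro b d
    have h1 := hB2 b d
    have h2 := hB2 d b
    have h3 : (∑ a, ∑ e, Riem d b a e * Yup a e)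
        = -(∑ a, ∑ e, Riem b d a e * Yup a e) := by
      rw [← neg2]
      exact Finset.sum_congr rfl fun a _ => Finset.sum_congr rfl fun e _ => by
        rw [hRiemAsym₁ d b a e]; ring
    linarith
  -- the four contracted second-derivative sums
  have hL1 : ∀ b d, (∑ a, ∑ x, ginv a x * DDY a b x d)
      = u d b + (Dh b d - g b d * phi) := by
    intro b d
    have hpt : ∀ a x, ginv a x * DDY a b x d
        = ginv a x * A a x d b
          + (ginv a x * (g b x * Dh a d) - ginv a x * (g b d * Dh a x)) := by
      intro a x
      have h1 := hA_def a b x d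
      have h2 := hAcyc a b x d
      rw [show DDY a b x d = A a x d b + g b x * Dh a d - g b d * Dh a x by
        rw [← h2]; linarith]
      ring
    rw [Finset.sum_congr rfl fun a _ => Finset.sum_congr rfl fun x _ => hpt a x]
    rw [split2, split2s, contrR b (fun a => Dh a d),
      pullk (g b d) (fun a x => Dh a x), hu_def d b, hphi_def]
  have hL2 : ∀ b d, (∑ a, ∑ x, ginv a x * DDY b a x d)
      = m b d + (n * Dh b d - Dh b d) := by
    intro b d
    have hpt : ∀ a x, ginv a x * DDY b a x d
        = ginv a x * A b a x d
          + ((ginv a x * g a x) * Dh b d - ginv a x * (g a d * Dh b x)) := by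
      intro a x
      have h1 := hA_def b a x d
      rw [show DDY b a x d = A b a x d + g a x * Dh b d - g a d * Dh b x by linarith]
      ring
    rw [Finset.sum_congr rfl fun a _ => Finset.sum_congr rfl fun x _ => hpt a x]
    rw [split2, split2s, contrL d (fun x => Dh b x),
      pullR2 (Dh b d) (fun a x => ginv a x * g a x), trg, hm_def b d]
  have hL3 : ∀ b d, (∑ a, ∑ x, ginv a x * DDY a b d x)
      = u b d + (g b d * phi - Dh b d) := by
    intro b d
    have hpt : ∀ a x, ginv a x * DDY a b d x
        = ginv a x * A a x b d
          + (ginv a x * (g b d * Dh a x) - ginv a x * (g b x * Dh a d)) := by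
      intro a x
      have h1 := hA_def a b d x
      have h2 : A a b d x = A a x b d := by rw [hAcyc a b d x, hAcyc a d x b]
      rw [show DDY a b d x = A a x b d + g b d * Dh a x - g b x * Dh a d by
        rw [← h2]; linarith]
      ring
    rw [Finset.sum_congr rfl fun a _ => Finset.sum_congr rfl fun x _ => hpt a x]
    rw [split2, split2s, contrR b (fun a => Dh a d),
      pullk (g b d) (fun a x => Dh a x), hu_def b d, hphi_def]
  have hL4 : ∀ b d, (∑ a, ∑ x, ginv a x * DDY b a d x)
      = m b d + (Dh b d - n * Dh b d) := by
    intro b d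
    have hpt : ∀ a x, ginv a x * DDY b a d x
        = ginv a x * A b x a d
          + (ginv a x * (g a d * Dh b x) - (ginv a x * g a x) * Dh b d) := by
      intro a x
      have h1 := hA_def b a d x
      have h2 : A b a d x = A b x a d := by rw [hAcyc b a d x, hAcyc b d x a]
      rw [show DDY b a d x = A b x a d + g a d * Dh b x - g a x * Dh b d by
        rw [← h2]; linarith]
      ring
    rw [Finset.sum_congr rfl fun a _ => Finset.sum_congr rfl fun x _ => hpt a x]
    rw [split2, split2s, contrL d (fun x => Dh b x),
      pullR2 (Dh b d) (fun a x => ginv a x * g a x), trg,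
      swap2 (fun a x => A b x a d), hm_def b d]
  -- the two contracted Ricci identities
  have eqI : ∀ b d, (u d b + (Dh b d - g b d * phi)) - (m b d + (n * Dh b d - Dh b d))
      = K b d + B b d := by
    intro b d
    have base : (∑ a, ∑ x, ginv a x * (DDY a b x d - DDY b a x d))
        = ∑ a, ∑ x, ginv a x *
            ∑ e, ∑ f, ginv e f * (Riem a b x e * Y f d + Riem a b d e * Y x f) :=
      Finset.sum_congr rfl fun a _ => Finset.sum_congr rfl fun x _ => by
        rw [hRicciId a b x d]
    have hsub : (∑ a, ∑ x, ginv a x * (DDY a b x d - DDY b a x d))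
        = (∑ a, ∑ x, ginv a x * DDY a b x d) - ∑ a, ∑ x, ginv a x * DDY b a x d := by
      rw [← split2s]
      exact Finset.sum_congr rfl fun a _ => Finset.sum_congr rfl fun x _ => by ring
    have hrhs : (∑ a, ∑ x, ginv a x *
          ∑ e, ∑ f, ginv e f * (Riem a b x e * Y f d + Riem a b d e * Y x f))
        = K b d + B b d := by
      rw [split4, hKcomp b d, hB_def b d]
    rw [hL1, hL2] at hsub
    linarith [base, hsub, hrhs]
  have eqII : ∀ b d, (u b d + (g b d * phi - Dh b d)) - (m b d + (Dh b d - n * Dh b d))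
      = -B b d + -K b d := by
    intro b d
    have base : (∑ a, ∑ x, ginv a x * (DDY a b d x - DDY b a d x))
        = ∑ a, ∑ x, ginv a x *
            ∑ e, ∑ f, ginv e f * (Riem a b d e * Y f x + Riem a b x e * Y d f) :=
      Finset.sum_congr rfl fun a _ => Finset.sum_congr rfl fun x _ => by
        rw [hRicciId a b d x]
    have hsub : (∑ a, ∑ x, ginv a x * (DDY a b d x - DDY b a d x))
        = (∑ a, ∑ x, ginv a x * DDY a b d x) - ∑ a, ∑ x, ginv a x * DDY b a d x := by
      rw [← split2s]
      exact Finset.sum_congr rfl fun a _ => Finset.sum_congr rfl fun x _ => by ring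
    have p1 : (∑ a, ∑ x, ginv a x * ∑ e, ∑ f, ginv e f * (Riem a b d e * Y f x))
        = -B b d := by
      rw [show (∑ a, ∑ x, ginv a x * ∑ e, ∑ f, ginv e f * (Riem a b d e * Y f x))
          = ∑ a, ∑ x, ginv a x * ∑ e, ∑ f, ginv e f * (-(Riem a b d e * Y x f)) from
        Finset.sum_congr rfl fun a _ => Finset.sum_congr rfl fun x _ =>
          congrArg (fun t => ginv a x * t)
            (Finset.sum_congr rfl fun e _ => Finset.sum_congr rfl fun f _ => by
              rw [hYalt f x]; ring)]
      rw [neg4, hB_def b d]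
    have p2 : (∑ a, ∑ x, ginv a x * ∑ e, ∑ f, ginv e f * (Riem a b x e * Y d f))
        = -K b d := by
      rw [show (∑ a, ∑ x, ginv a x * ∑ e, ∑ f, ginv e f * (Riem a b x e * Y d f))
          = ∑ a, ∑ x, ginv a x * ∑ e, ∑ f, ginv e f * (-(Riem a b x e * Y f d)) from
        Finset.sum_congr rfl fun a _ => Finset.sum_congr rfl fun x _ =>
          congrArg (fun t => ginv a x * t)
            (Finset.sum_congr rfl fun e _ => Finset.sum_congr rfl fun f _ => by
              rw [hYalt d f]; ring)]
      rw [neg4, hKcomp b d]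
    have hrhs : (∑ a, ∑ x, ginv a x *
          ∑ e, ∑ f, ginv e f * (Riem a b d e * Y f x + Riem a b x e * Y d f))
        = -B b d + -K b d := by
      rw [split4, p1, p2]
    rw [hL3, hL4] at hsub
    linarith [base, hsub, hrhs]
  -- the symmetrized identity
  have main2 : ∀ b d, 4 * Dh b d + 4 * Dh d b - 2 * (n * Dh b d) - 2 * (n * Dh d b)
      - 4 * (g b d * phi) = 2 * K b d + 2 * K d b := by
    intro b d
    have h1 := eqI b d
    have h2 := eqII b d
    have h3 := eqI d b
    have h4 := eqII d b
    have h5 := hBsym b d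
    have hg : g d b * phi = g b d * phi := by rw [hgsymm b d]
    linarith
  -- traces
  have hS0 : (∑ b, ∑ d, ginv b d * K b d) = 0 := by
    have h1 : (∑ b, ∑ d, ginv b d * K b d)
        = ∑ b, ∑ d, ginv b d * ∑ e, ∑ f, ginv e f * (Ric b e * Y f d) :=
      Finset.sum_congr rfl fun b _ => Finset.sum_congr rfl fun d _ => by
        rw [hK_def b d]
    have h2 := fub (fun b d e f => Ric b e * Y f d)
    have h3 : (∑ b, ∑ d, ginv b d * ∑ e, ∑ f, ginv e f * (Ric e b * Y d f))
        = ∑ b, ∑ d, ginv b d * ∑ e, ∑ f, ginv e f * (-(Ric b e * Y f d)) :=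
      Finset.sum_congr rfl fun b _ => Finset.sum_congr rfl fun d _ =>
        congrArg (fun t => ginv b d * t)
          (Finset.sum_congr rfl fun e _ => Finset.sum_congr rfl fun f _ => by
            rw [hRicS e b, hYalt d f]; ring)
    have h4 := neg4 (fun b d e f => Ric b e * Y f d)
    linarith
  have hS1 : (∑ b, ∑ d, ginv b d * K d b) = 0 := by
    rw [swap2 (fun p q => K q p)]
    have h1 : (∑ b, ∑ d, ginv b d * K b d) = 0 := hS0
    exact h1
  have lin5 : ∀ F1 F2 F3 F4 F5 : ι → ι → ℝ,
      (∑ b, ∑ d, (4 * F1 b d + 4 * F2 b d - 2 * (n * F3 b d) - 2 * (n * F4 b d)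
        - 4 * (phi * F5 b d)))
      = 4 * (∑ b, ∑ d, F1 b d) + 4 * (∑ b, ∑ d, F2 b d)
        - 2 * (n * ∑ b, ∑ d, F3 b d) - 2 * (n * ∑ b, ∑ d, F4 b d)
        - 4 * (phi * ∑ b, ∑ d, F5 b d) := by
    intro F1 F2 F3 F4 F5
    simp [Finset.sum_add_distrib, Finset.sum_sub_distrib, Finset.mul_sum]
  have lin2 : ∀ F G : ι → ι → ℝ,
      (∑ b, ∑ d, (2 * F b d + 2 * G b d))
      = 2 * (∑ b, ∑ d, F b d) + 2 * (∑ b, ∑ d, G b d) := by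
    intro F G
    simp [Finset.sum_add_distrib, Finset.mul_sum]
  have htr : phi = 0 := by
    have hmm : (∑ b, ∑ d, ginv b d * (4 * Dh b d + 4 * Dh d b - 2 * (n * Dh b d)
          - 2 * (n * Dh d b) - 4 * (g b d * phi)))
        = ∑ b, ∑ d, ginv b d * (2 * K b d + 2 * K d b) :=
      Finset.sum_congr rfl fun b _ => Finset.sum_congr rfl fun d _ => by
        rw [main2 b d]
    have hLpt : ∀ b d, ginv b d * (4 * Dh b d + 4 * Dh d b - 2 * (n * Dh b d)
          - 2 * (n * Dh d b) - 4 * (g b d * phi))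
        = 4 * (ginv b d * Dh b d) + 4 * (ginv b d * Dh d b)
          - 2 * (n * (ginv b d * Dh b d)) - 2 * (n * (ginv b d * Dh d b))
          - 4 * (phi * (ginv b d * g b d)) := by
      intro b d; ring
    have hL : (∑ b, ∑ d, ginv b d * (4 * Dh b d + 4 * Dh d b - 2 * (n * Dh b d)
          - 2 * (n * Dh d b) - 4 * (g b d * phi)))
        = 4 * phi + 4 * phi - 2 * (n * phi) - 2 * (n * phi) - 4 * (phi * n) := by
      rw [Finset.sum_congr rfl fun b _ => Finset.sum_congr rfl fun d _ => hLpt b d]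
      rw [lin5 (fun b d => ginv b d * Dh b d) (fun b d => ginv b d * Dh d b)
        (fun b d => ginv b d * Dh b d) (fun b d => ginv b d * Dh d b)
        (fun b d => ginv b d * g b d)]
      rw [swap2 (fun p q => Dh q p), ← hphi_def, trg]
    have hRpt : ∀ b d, ginv b d * (2 * K b d + 2 * K d b)
        = 2 * (ginv b d * K b d) + 2 * (ginv b d * K d b) := by
      intro b d; ring
    have hR : (∑ b, ∑ d, ginv b d * (2 * K b d + 2 * K d b)) = 0 := by
      rw [Finset.sum_congr rfl fun b _ => Finset.sum_congr rfl fun d _ => hRpt b d]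
      rw [lin2 (fun b d => ginv b d * K b d) (fun b d => ginv b d * K d b)]
      rw [hS0, hS1]
      ring
    have e0 : 4 * phi + 4 * phi - 2 * (n * phi) - 2 * (n * phi) - 4 * (phi * n) = 0 := by
      rw [← hL, hmm, hR]
    have e2 : (8 - 8 * n) * phi = 0 := by linear_combination e0
    rcases mul_eq_zero.mp e2 with hc | hc
    · exfalso; linarith
    · exact hc
  -- conclusion
  intro c d
  have hgoalsum : (∑ e, ∑ f, ginv e f * (Ric e c * Y d f + Ric e d * Y c f))
      = -K c d + -K d c := by
    have hpt : ∀ e f, ginv e f * (Ric e c * Y d f + Ric e d * Y c f)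
        = -(ginv e f * (Ric c e * Y f d)) + -(ginv e f * (Ric d e * Y f c)) := by
      intro e f
      rw [hRicS e c, hRicS e d, hYalt d f, hYalt c f]; ring
    rw [Finset.sum_congr rfl fun e _ => Finset.sum_congr rfl fun f _ => hpt e f]
    rw [split2, neg2, neg2, hK_def c d, hK_def d c]
  have hmain := main2 c d
  rw [htr] at hmain
  rw [hgoalsum]
  have hne : n - 2 ≠ 0 := by intro hh; rw [sub_eq_zero] at hh; linarith
  have hfin : Dh c d + Dh d c = (-K c d + -K d c) / (n - 2) := by
    rw [eq_div_iff hne]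
    linear_combination (-(1/2)) * hmain
  rw [hfin]
  ring
end

section
/- Define G_{abcd} := C_{ab[c}{}^f Y_{d]f} + C_{cd[a}{}^f Y_{b]f}, where C is the Weyl tensor and Y an antisymmetric rank-2 tensor. Then G has all the algebraic symmetries of a Weyl tensor: G_{abcd} = G_{[ab][cd]}, G_{abcd} = G_{cdab}, G_{a[bcd]} = 0, and G^a{}_{bad} = 0. -/
open Finset

private lemma sum2_congr {ι : Type*} [Fintype ι] (f g : ι → ι → ℝ)
    (h : ∀ x y, f x y = g x y) :
    ∑ x, ∑ y, f x y = ∑ x, ∑ y, g x y :=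
  Finset.sum_congr rfl fun x _ => Finset.sum_congr rfl fun y _ => h x y

private lemma sum2_neg {ι : Type*} [Fintype ι] (f : ι → ι → ℝ) :
    ∑ x, ∑ y, -f x y = -∑ x, ∑ y, f x y := by
  simp

private lemma sum4_comm {ι : Type*} [Fintype ι] (F : ι → ι → ι → ι → ℝ) :
    ∑ a : ι, ∑ e : ι, ∑ p : ι, ∑ q : ι, F a e p q
      = ∑ p : ι, ∑ q : ι, ∑ a : ι, ∑ e : ι, F a e p q := by
  calc ∑ a : ι, ∑ e : ι, ∑ p : ι, ∑ q : ι, F a e p q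
      = ∑ a : ι, ∑ p : ι, ∑ e : ι, ∑ q : ι, F a e p q :=
        Finset.sum_congr rfl fun a _ => Finset.sum_comm
    _ = ∑ p : ι, ∑ a : ι, ∑ e : ι, ∑ q : ι, F a e p q := Finset.sum_comm
    _ = ∑ p : ι, ∑ a : ι, ∑ q : ι, ∑ e : ι, F a e p q :=
        Finset.sum_congr rfl fun p _ => Finset.sum_congr rfl fun a _ => Finset.sum_comm
    _ = ∑ p : ι, ∑ q : ι, ∑ a : ι, ∑ e : ι, F a e p q :=
        Finset.sum_congr rfl fun p _ => Finset.sum_comm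

private lemma antisymm_symm_sum {ι : Type*} [Fintype ι] (A S : ι → ι → ℝ)
    (hA : ∀ s t, A s t = -A t s) (hS : ∀ s t, S s t = S t s) :
    ∑ s, ∑ t, A s t * S s t = 0 := by
  have h : ∑ s, ∑ t, A s t * S s t = -∑ s, ∑ t, A s t * S s t := by
    conv_lhs => rw [Finset.sum_comm]
    rw [← sum2_neg]
    exact sum2_congr _ _ fun x y => by rw [hA y x, hS y x]; ring
  linarith

/-- Let `C` have all the algebraic symmetries of a Weyl tensor and
let `Y` be antisymmetric.  Then `G_{abcd} := C_{ab[c}{}^f Y_{d]f} + C_{cd[a}{}^f Y_{b]f}`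
has all the algebraic symmetries of a Weyl tensor: antisymmetry in each pair,
pair-exchange symmetry, the first Bianchi identity `G_{a[bcd]} = 0`, and
tracelessness `G^a{}_{bad} = 0`. -/
theorem statement9 {ι : Type*} [Fintype ι] [DecidableEq ι]
    (g ginv : ι → ι → ℝ)
    (hgsymm : ∀ a b, g a b = g b a) (hginvsymm : ∀ a b, ginv a b = ginv b a)
    (hinv : ∀ a b, ∑ c, ginv a c * g c b = if a = b then (1 : ℝ) else 0)
    (C : ι → ι → ι → ι → ℝ)
    (hCAsym₁ : ∀ a b c d, C a b c d = -C b a c d)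
    (hCAsym₂ : ∀ a b c d, C a b c d = -C a b d c)
    (hCPair : ∀ a b c d, C a b c d = C c d a b)
    (hCBianchi : ∀ a b c d, C a b c d + C a c d b + C a d b c = 0)
    (hCTraceless : ∀ c d, ∑ a, ∑ b, ginv a b * C a c b d = 0)
    (Y : ι → ι → ℝ) (hYalt : ∀ a b, Y a b = -Y b a)
    (G : ι → ι → ι → ι → ℝ)
    (hG : ∀ a b c d, G a b c d
      = (1 / 2) * ∑ e, ∑ f, ginv e f *
          (C a b c e * Y d f - C a b d e * Y c f
            + C c d a e * Y b f - C c d b e * Y a f)) :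
    (∀ a b c d, G a b c d = -G b a c d) ∧
    (∀ a b c d, G a b c d = -G a b d c) ∧
    (∀ a b c d, G a b c d = G c d a b) ∧
    (∀ a b c d, G a b c d + G a c d b + G a d b c = 0) ∧
    (∀ b d, ∑ a, ∑ e, ginv a e * G a b e d = 0) := by
  -- cyclic Bianchi identity in the first three indices
  have hCyc : ∀ a b c d, C a b c d + C b c a d + C c a b d = 0 := by
    intro a b c d
    have e1 : C a b c d = -C d c a b := (hCPair a b c d).trans (hCAsym₁ c d a b)
    have e2 : C b c a d = -C d a b c := (hCPair b c a d).trans (hCAsym₁ a d b c)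
    have e3 : C c a b d = -C d b c a := (hCPair c a b d).trans (hCAsym₁ b d c a)
    have e4 := hCBianchi d a b c
    linarith
  have hsw : ∀ s x y t, C s x y t = C t y x s := by
    intro s x y t
    rw [hCAsym₁ s x y t, hCAsym₂ x s y t, hCPair x s t y]
    ring
  refine ⟨?_, ?_, ?_, ?_, ?_⟩
  · intro a b c d
    have h : ∑ e, ∑ f, ginv e f *
          (C b a c e * Y d f - C b a d e * Y c f + C c d b e * Y a f - C c d a e * Y b f)
        = ∑ e, ∑ f, -(ginv e f *
          (C a b c e * Y d f - C a b d e * Y c f + C c d a e * Y b f - C c d b e * Y a f)) :=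
      sum2_congr _ _ fun e f => by rw [hCAsym₁ b a c e, hCAsym₁ b a d e]; ring
    rw [hG b a c d, hG a b c d, h, sum2_neg]; ring
  · intro a b c d
    have h : ∑ e, ∑ f, ginv e f *
          (C a b d e * Y c f - C a b c e * Y d f + C d c a e * Y b f - C d c b e * Y a f)
        = ∑ e, ∑ f, -(ginv e f *
          (C a b c e * Y d f - C a b d e * Y c f + C c d a e * Y b f - C c d b e * Y a f)) :=
      sum2_congr _ _ fun e f => by rw [hCAsym₁ d c a e, hCAsym₁ d c b e]; ring
    rw [hG a b d c, hG a b c d, h, sum2_neg]; ring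
  · intro a b c d
    rw [hG c d a b, hG a b c d]
    congr 1
    exact sum2_congr _ _ fun e f => by ring
  · intro a b c d
    rw [hG a b c d, hG a c d b, hG a d b c, ← mul_add, ← mul_add]
    simp only [← Finset.sum_add_distrib]
    refine mul_eq_zero_of_right _ (Finset.sum_eq_zero fun e _ =>
      Finset.sum_eq_zero fun f _ => ?_)
    rw [hCAsym₁ a c b e, hCAsym₁ d b a e, hCAsym₁ a d b e, hCAsym₁ a d c e]
    linear_combination (ginv e f * Y d f) * hCyc a b c e - (ginv e f * Y c f) * hCyc a b d e
      + (ginv e f * Y b f) * hCyc c d a e - (ginv e f * Y a f) * hCyc c d b e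
  · intro b d
    simp only [hG, Finset.mul_sum]
    simp only [mul_sub, mul_add, Finset.sum_add_distrib, Finset.sum_sub_distrib]
    have hZanti : ∀ s t : ι, (∑ x : ι, ∑ y : ι, ginv s x * ginv t y * Y x y)
        = -(∑ x : ι, ∑ y : ι, ginv t x * ginv s y * Y x y) := by
      intro s t
      rw [Finset.sum_comm, ← sum2_neg]
      exact sum2_congr _ _ fun x y => by rw [hYalt y x]; ring
    have h1 : ∑ a : ι, ∑ e : ι, ∑ p : ι, ∑ q : ι,
        ginv a e * (1 / 2 * (ginv p q * (C a b e p * Y d q))) = 0 := by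
      rw [sum4_comm]
      refine Finset.sum_eq_zero fun p _ => Finset.sum_eq_zero fun q _ => ?_
      have hf : ∑ a : ι, ∑ e : ι, ginv a e * (1 / 2 * (ginv p q * (C a b e p * Y d q)))
          = (1 / 2 * (ginv p q * Y d q)) * ∑ a : ι, ∑ e : ι, ginv a e * C a b e p := by
        simp only [Finset.mul_sum]
        exact sum2_congr _ _ fun a e => by ring
      rw [hf, hCTraceless b p, mul_zero]
    have htr3 : ∀ p : ι, ∑ a : ι, ∑ e : ι, ginv a e * C e d a p = 0 := by
      intro p
      have h : ∑ a : ι, ∑ e : ι, ginv a e * C e d a p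
          = ∑ x : ι, ∑ y : ι, ginv x y * C x d y p := by
        rw [Finset.sum_comm]
        exact sum2_congr _ _ fun x y => by rw [hginvsymm y x]
      rw [h, hCTraceless d p]
    have h3 : ∑ a : ι, ∑ e : ι, ∑ p : ι, ∑ q : ι,
        ginv a e * (1 / 2 * (ginv p q * (C e d a p * Y b q))) = 0 := by
      rw [sum4_comm]
      refine Finset.sum_eq_zero fun p _ => Finset.sum_eq_zero fun q _ => ?_
      have hf : ∑ a : ι, ∑ e : ι, ginv a e * (1 / 2 * (ginv p q * (C e d a p * Y b q)))
          = (1 / 2 * (ginv p q * Y b q)) * ∑ a : ι, ∑ e : ι, ginv a e * C e d a p := by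
        simp only [Finset.mul_sum]
        exact sum2_congr _ _ fun a e => by ring
      rw [hf, htr3 p, mul_zero]
    have e2 : ∑ a : ι, ∑ e : ι, ∑ p : ι, ∑ q : ι,
          ginv a e * (1 / 2 * (ginv p q * (C a b d p * Y e q)))
        = ∑ s : ι, ∑ t : ι, (∑ x : ι, ∑ y : ι, ginv s x * ginv t y * Y x y)
            * (1 / 2 * C s b d t) := by
      calc ∑ a : ι, ∑ e : ι, ∑ p : ι, ∑ q : ι,
            ginv a e * (1 / 2 * (ginv p q * (C a b d p * Y e q)))
          = ∑ a : ι, ∑ p : ι, ∑ e : ι, ∑ q : ι,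
            ginv a e * (1 / 2 * (ginv p q * (C a b d p * Y e q))) :=
            Finset.sum_congr rfl fun a _ => Finset.sum_comm
        _ = ∑ s : ι, ∑ t : ι, (∑ x : ι, ∑ y : ι, ginv s x * ginv t y * Y x y)
              * (1 / 2 * C s b d t) :=
            Finset.sum_congr rfl fun s _ => Finset.sum_congr rfl fun t _ => by
              simp only [Finset.sum_mul]
              exact sum2_congr _ _ fun x y => by ring
    have e4 : ∑ a : ι, ∑ e : ι, ∑ p : ι, ∑ q : ι,
          ginv a e * (1 / 2 * (ginv p q * (C e d b p * Y a q)))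
        = ∑ s : ι, ∑ t : ι, (∑ x : ι, ∑ y : ι, ginv s x * ginv t y * Y x y)
            * (1 / 2 * C s d b t) := by
      calc ∑ a : ι, ∑ e : ι, ∑ p : ι, ∑ q : ι,
            ginv a e * (1 / 2 * (ginv p q * (C e d b p * Y a q)))
          = ∑ e : ι, ∑ a : ι, ∑ p : ι, ∑ q : ι,
            ginv a e * (1 / 2 * (ginv p q * (C e d b p * Y a q))) := Finset.sum_comm
        _ = ∑ e : ι, ∑ p : ι, ∑ a : ι, ∑ q : ι,
            ginv a e * (1 / 2 * (ginv p q * (C e d b p * Y a q))) :=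
            Finset.sum_congr rfl fun e _ => Finset.sum_comm
        _ = ∑ s : ι, ∑ t : ι, (∑ x : ι, ∑ y : ι, ginv s x * ginv t y * Y x y)
              * (1 / 2 * C s d b t) :=
            Finset.sum_congr rfl fun s _ => Finset.sum_congr rfl fun t _ => by
              simp only [Finset.sum_mul]
              exact sum2_congr _ _ fun x y => by rw [hginvsymm x s]; ring
    have h24 : (∑ a : ι, ∑ e : ι, ∑ p : ι, ∑ q : ι,
          ginv a e * (1 / 2 * (ginv p q * (C a b d p * Y e q))))
        + (∑ a : ι, ∑ e : ι, ∑ p : ι, ∑ q : ι,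
          ginv a e * (1 / 2 * (ginv p q * (C e d b p * Y a q)))) = 0 := by
      rw [e2, e4, ← Finset.sum_add_distrib]
      have hfin : ∑ s : ι, (∑ t : ι, (∑ x : ι, ∑ y : ι, ginv s x * ginv t y * Y x y)
              * (1 / 2 * C s b d t)
            + ∑ t : ι, (∑ x : ι, ∑ y : ι, ginv s x * ginv t y * Y x y)
              * (1 / 2 * C s d b t))
          = ∑ s : ι, ∑ t : ι, (∑ x : ι, ∑ y : ι, ginv s x * ginv t y * Y x y)
              * (1 / 2 * C s b d t + 1 / 2 * C s d b t) := by
        refine Finset.sum_congr rfl fun s _ => ?_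
        rw [← Finset.sum_add_distrib]
        exact Finset.sum_congr rfl fun t _ => by ring
      rw [hfin]
      exact antisymm_symm_sum _ _ hZanti fun s t => by
        rw [hsw s b d t, hsw s d b t]; ring
    linarith [h1, h3, h24]
end

section
/- If A is a Killing-Yano tensor of order p on a pseudo-Riemannian manifold, then its second covariant derivative satisfies 2 ∇_a ∇_b A_{c d e₃…e_p} = −(p+1) A_{f[d e₃…e_p} R_{bc]a}{}^f, where the antisymmetrization is over the p+1 indices b, c, d, e₃, …, e_p. -/
open Finset

/-! ### Auxiliary lemmas on `esign` and `alt` -/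

section EsignAlt
variable {ι : Type*} {p : ℕ}

private lemma KY_esign_mul (σ τ : Equiv.Perm (Fin p)) : esign (σ * τ) = esign σ * esign τ := by
  unfold esign; rw [map_mul, Units.val_mul, Int.cast_mul]

private lemma KY_esign_symm (σ : Equiv.Perm (Fin p)) : esign σ.symm = esign σ := by
  show esign σ⁻¹ = esign σ
  unfold esign; rw [Equiv.Perm.sign_inv]

private lemma KY_esign_mul_self (σ : Equiv.Perm (Fin p)) : esign σ * esign σ = 1 := by
  unfold esign; rw [← Int.cast_mul, ← Units.val_mul, Int.units_mul_self]; norm_num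

private lemma KY_esign_swap {x y : Fin p} (h : x ≠ y) : esign (Equiv.swap x y) = -1 := by
  unfold esign; rw [Equiv.Perm.sign_swap h]; norm_num

private lemma KY_esign_cycleRange {m : ℕ} (i : Fin (m+1)) :
    esign (Fin.cycleRange i) = (-1 : ℝ) ^ (i : ℕ) := by
  unfold esign; rw [Fin.sign_cycleRange]; push_cast; ring

private lemma KY_alt_congr {T S : (Fin p → ι) → ℝ} (h : ∀ u, T u = S u) (v : Fin p → ι) :
    alt T v = alt S v := by
  unfold alt; congr 1; exact Finset.sum_congr rfl fun σ _ => by rw [h]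

private lemma KY_alt_smul (c : ℝ) (T : (Fin p → ι) → ℝ) (v : Fin p → ι) :
    alt (fun u => c * T u) v = c * alt T v := by
  unfold alt
  rw [Finset.mul_sum, Finset.mul_sum, Finset.mul_sum]
  exact Finset.sum_congr rfl fun σ _ => by dsimp only; ring

private lemma KY_alt_sum {κ : Type*} (s : Finset κ) (F : κ → (Fin p → ι) → ℝ) (v : Fin p → ι) :
    alt (fun u => ∑ i ∈ s, F i u) v = ∑ i ∈ s, alt (F i) v := by
  unfold alt
  simp only [Finset.mul_sum]
  rw [Finset.sum_comm]

private lemma KY_alt_combo (F1 F2 F3 : (Fin p → ι) → ℝ) (w : Fin p → ι) :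
    alt (fun u => F1 u - F2 u + F3 u) w = alt F1 w - alt F2 w + alt F3 w := by
  unfold alt
  rw [← mul_sub, ← mul_add, ← Finset.sum_sub_distrib, ← Finset.sum_add_distrib]
  congr 1
  exact Finset.sum_congr rfl fun σ _ => by dsimp only; ring

private lemma KY_alt_add3 (F1 F2 F3 : (Fin p → ι) → ℝ) (w : Fin p → ι) :
    alt (fun u => F1 u + F2 u + F3 u) w = alt F1 w + alt F2 w + alt F3 w := by
  unfold alt
  rw [← mul_add, ← mul_add, ← Finset.sum_add_distrib, ← Finset.sum_add_distrib]
  congr 1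
  exact Finset.sum_congr rfl fun σ _ => by dsimp only; ring

private lemma KY_alt_add (F1 F2 : (Fin p → ι) → ℝ) (w : Fin p → ι) :
    alt (fun u => F1 u + F2 u) w = alt F1 w + alt F2 w := by
  unfold alt
  rw [← mul_add, ← Finset.sum_add_distrib]
  congr 1
  exact Finset.sum_congr rfl fun σ _ => by dsimp only; ring

private lemma KY_alt_zero (w : Fin p → ι) : alt (fun _ : Fin p → ι => (0:ℝ)) w = 0 := by
  unfold alt; simp

private lemma KY_alt_precomp (T : (Fin p → ι) → ℝ) (σ : Equiv.Perm (Fin p)) (v : Fin p → ι) :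
    alt (fun w => T (w ∘ σ)) v = esign σ * alt T v := by
  have key : ∑ τ : Equiv.Perm (Fin p), esign τ * T ((v ∘ ⇑τ) ∘ ⇑σ)
      = ∑ τ : Equiv.Perm (Fin p), esign σ * (esign τ * T (v ∘ ⇑τ)) := by
    refine Fintype.sum_equiv (Equiv.mulRight σ)
      (fun τ => esign τ * T ((v ∘ ⇑τ) ∘ ⇑σ))
      (fun ρ => esign σ * (esign ρ * T (v ∘ ⇑ρ))) fun τ => ?_
    dsimp only [Equiv.coe_mulRight]
    have h1 : (v ∘ ⇑τ) ∘ ⇑σ = v ∘ ⇑(τ * σ) := rfl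
    rw [h1, KY_esign_mul]
    linear_combination (-(esign τ * T (v ∘ ⇑(τ * σ)))) * (KY_esign_mul_self σ)
  show (Nat.factorial p : ℝ)⁻¹ * ∑ τ : Equiv.Perm (Fin p), esign τ * T ((v ∘ ⇑τ) ∘ ⇑σ) = _
  rw [key, ← Finset.mul_sum]
  unfold alt
  ring

private lemma KY_isAlt_alt (T : (Fin p → ι) → ℝ) : IsAlt (alt T) := by
  intro σ v
  have key : ∑ τ : Equiv.Perm (Fin p), esign τ * T ((v ∘ ⇑σ) ∘ ⇑τ)
      = ∑ τ : Equiv.Perm (Fin p), esign σ * (esign τ * T (v ∘ ⇑τ)) := by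
    refine Fintype.sum_equiv (Equiv.mulLeft σ)
      (fun τ => esign τ * T ((v ∘ ⇑σ) ∘ ⇑τ))
      (fun ρ => esign σ * (esign ρ * T (v ∘ ⇑ρ))) fun τ => ?_
    dsimp only [Equiv.coe_mulLeft]
    have h1 : (v ∘ ⇑σ) ∘ ⇑τ = v ∘ ⇑(σ * τ) := rfl
    rw [h1, KY_esign_mul]
    linear_combination (-(esign τ * T (v ∘ ⇑(σ * τ)))) * (KY_esign_mul_self σ)
  show (Nat.factorial p : ℝ)⁻¹ * ∑ τ : Equiv.Perm (Fin p), esign τ * T ((v ∘ ⇑σ) ∘ ⇑τ) = _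
  rw [key, ← Finset.mul_sum]
  unfold alt
  ring

private lemma KY_alt_of_isAlt {T : (Fin p → ι) → ℝ} (h : IsAlt T) (v : Fin p → ι) :
    alt T v = T v := by
  unfold alt
  have hc : ∀ σ : Equiv.Perm (Fin p), esign σ * T (v ∘ σ) = T v := fun σ => by
    rw [h σ v, ← mul_assoc, KY_esign_mul_self, one_mul]
  rw [Finset.sum_congr rfl fun σ _ => hc σ, Finset.sum_const, Finset.card_univ,
    Fintype.card_perm, Fintype.card_fin, nsmul_eq_mul, ← mul_assoc,
    inv_mul_cancel₀ (by exact_mod_cast (Nat.factorial_ne_zero p)), one_mul]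

private lemma KY_isAlt_of_eq_alt {T : (Fin p → ι) → ℝ} (h : ∀ v, T v = alt T v) : IsAlt T := by
  intro σ v
  rw [h (v ∘ σ), h v]
  exact KY_isAlt_alt T σ v

private lemma KY_update_eq {m : ℕ} (v : Fin (m+1) → ι) (i : Fin (m+1)) (f : ι) :
    Function.update v i f = (Fin.cons f (v ∘ i.succAbove)) ∘ (Fin.cycleRange i) := by
  funext j
  by_cases hj : j = i
  · subst hj
    simp [Fin.cycleRange_self]
  · obtain ⟨k, rfl⟩ := Fin.exists_succAbove_eq hj
    simp [Function.update_of_ne (Fin.succAbove_ne i k), Fin.cycleRange_succAbove]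

private lemma KY_isAlt_update {m : ℕ} {A : (Fin (m+1) → ι) → ℝ} (hA : IsAlt A)
    (v : Fin (m+1) → ι) (i : Fin (m+1)) (f : ι) :
    A (Function.update v i f) = (-1 : ℝ) ^ (i : ℕ) * A (Fin.cons f (v ∘ i.succAbove)) := by
  rw [KY_update_eq, hA (Fin.cycleRange i), KY_esign_cycleRange]

private lemma KY_isAlt_swap01 {m : ℕ} {T : (Fin (m+2) → ι) → ℝ} (hT : IsAlt T)
    (x y : ι) (w : Fin m → ι) :
    T (Fin.cons x (Fin.cons y w)) = - T (Fin.cons y (Fin.cons x w)) := by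
  have h : Fin.cons x (Fin.cons y w) = (Fin.cons y (Fin.cons x w)) ∘ (Equiv.swap 0 1) := by
    funext j
    induction j using Fin.cases with
    | zero => simp
    | succ k =>
      induction k using Fin.cases with
      | zero => simp [Fin.succ_zero_eq_one]
      | succ l =>
        rw [Function.comp_apply, Equiv.swap_apply_of_ne_of_ne (Fin.succ_ne_zero _)
          (by rw [← Fin.succ_zero_eq_one]; exact fun h => Fin.succ_ne_zero _ (Fin.succ_injective _ h))]
        simp [Fin.cons_succ]
  rw [h, hT (Equiv.swap 0 1)]
  have he : esign (Equiv.swap (0 : Fin (m+2)) 1) = -1 := by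
    unfold esign
    rw [Equiv.Perm.sign_swap (by simp [Fin.ext_iff])]
    norm_num
  rw [he]; ring

end EsignAlt

/-! ### The special permutations of `Fin (r+3)` -/

section Perms
variable {r : ℕ}

private def γp (r : ℕ) : Equiv.Perm (Fin (r+3)) := Fin.cycleRange (2 : Fin (r+3))
private def σp (i : Fin (r+2)) : Equiv.Perm (Fin (r+3)) :=
  (Fin.cycleRange i.succ).symm * Equiv.swap 0 1
private def τp (i : Fin (r+1)) : Equiv.Perm (Fin (r+3)) :=
  (Fin.cycleRange i.succ.succ).symm * γp r
private def ρp (i : Fin (r+1)) : Equiv.Perm (Fin (r+3)) :=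
  (Fin.cycleRange i.succ.succ).symm * (γp r * γp r)

private lemma KY_symm_one (j : Fin (r+2)) : (Fin.cycleRange j.succ).symm 1 = 0 := by
  rw [← Fin.succ_zero_eq_one, Fin.cycleRange_symm_succ, Fin.succ_succAbove_zero]

private lemma KY_symm_ss (j : Fin (r+2)) (k : Fin (r+1)) :
    (Fin.cycleRange j.succ).symm k.succ.succ = (j.succAbove k).succ := by
  rw [Fin.cycleRange_symm_succ, Fin.succ_succAbove_succ]

private lemma KY_symm_two (i : Fin (r+1)) : (Fin.cycleRange i.succ.succ).symm 2 = 1 := by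
  have h2 : (2 : Fin (r+3)) = ((0 : Fin (r+1)).succ).succ := by
    rw [Fin.succ_zero_eq_one, Fin.succ_one_eq_two]
  rw [h2, Fin.cycleRange_symm_succ, Fin.succ_succAbove_succ, Fin.succ_succAbove_zero,
    Fin.succ_zero_eq_one]

private lemma KY_gp0 : γp r 0 = 1 := by
  have h : (0 : Fin (r+3)) < 2 := by rw [Fin.lt_def]; simp [Fin.val_two, Nat.mod_eq_of_lt (show 2 < r + 3 by omega)]
  rw [γp, Fin.cycleRange_of_lt h, zero_add]

private lemma KY_gp1 : γp r 1 = 2 := by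
  have h : (1 : Fin (r+3)) < 2 := by rw [Fin.lt_def]; simp [Fin.val_two, Fin.val_one, Nat.mod_eq_of_lt (show 2 < r + 3 by omega)]
  apply Fin.ext
  rw [γp, Fin.coe_cycleRange_of_lt h]
  simp [Fin.val_two, Fin.val_one, Nat.mod_eq_of_lt (show 2 < r + 3 by omega)]

private lemma KY_gp2 : γp r 2 = 0 := Fin.cycleRange_self 2

private lemma KY_gpfix (k : Fin r) : γp r k.succ.succ.succ = k.succ.succ.succ := by
  have h : (2 : Fin (r+3)) < k.succ.succ.succ := by
    rw [Fin.lt_def]; simp [Fin.val_two, Fin.val_succ, Nat.mod_eq_of_lt (show 2 < r + 3 by omega)]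
  exact Fin.cycleRange_of_gt h

private lemma KY_swap01_ss (k : Fin (r+1)) :
    Equiv.swap (0 : Fin (r+3)) 1 k.succ.succ = k.succ.succ :=
  Equiv.swap_apply_of_ne_of_ne (Fin.succ_ne_zero _)
    (by rw [← Fin.succ_zero_eq_one]; exact fun h => Fin.succ_ne_zero _ (Fin.succ_injective _ h))

private lemma KY_σp0 (i : Fin (r+2)) : σp i 0 = 0 := by
  rw [σp, Equiv.Perm.mul_apply, Equiv.swap_apply_left, KY_symm_one]

private lemma KY_σp1 (i : Fin (r+2)) : σp i 1 = i.succ := by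
  rw [σp, Equiv.Perm.mul_apply, Equiv.swap_apply_right, Fin.cycleRange_symm_zero]

private lemma KY_σps (i : Fin (r+2)) (k : Fin (r+1)) :
    σp i k.succ.succ = (i.succAbove k).succ := by
  rw [σp, Equiv.Perm.mul_apply, KY_swap01_ss, KY_symm_ss]

private lemma KY_τp0 (i : Fin (r+1)) : τp i 0 = 0 := by
  rw [τp, Equiv.Perm.mul_apply, KY_gp0, KY_symm_one]

private lemma KY_τp1 (i : Fin (r+1)) : τp i 1 = 1 := by
  rw [τp, Equiv.Perm.mul_apply, KY_gp1, KY_symm_two]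

private lemma KY_τp2 (i : Fin (r+1)) : τp i 2 = i.succ.succ := by
  rw [τp, Equiv.Perm.mul_apply, KY_gp2, Fin.cycleRange_symm_zero]

private lemma KY_τps (i : Fin (r+1)) (k : Fin r) :
    τp i k.succ.succ.succ = (i.succAbove k).succ.succ := by
  rw [τp, Equiv.Perm.mul_apply, KY_gpfix, KY_symm_ss, Fin.succ_succAbove_succ]

private lemma KY_ρp0 (i : Fin (r+1)) : ρp i 0 = 1 := by
  rw [ρp, Equiv.Perm.mul_apply, Equiv.Perm.mul_apply, KY_gp0, KY_gp1, KY_symm_two]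

private lemma KY_ρp1 (i : Fin (r+1)) : ρp i 1 = i.succ.succ := by
  rw [ρp, Equiv.Perm.mul_apply, Equiv.Perm.mul_apply, KY_gp1, KY_gp2, Fin.cycleRange_symm_zero]

private lemma KY_ρp2 (i : Fin (r+1)) : ρp i 2 = 0 := by
  rw [ρp, Equiv.Perm.mul_apply, Equiv.Perm.mul_apply, KY_gp2, KY_gp0, KY_symm_one]

private lemma KY_ρps (i : Fin (r+1)) (k : Fin r) :
    ρp i k.succ.succ.succ = (i.succAbove k).succ.succ := by
  rw [ρp, Equiv.Perm.mul_apply, Equiv.Perm.mul_apply, KY_gpfix, KY_gpfix, KY_symm_ss,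
    Fin.succ_succAbove_succ]

private lemma KY_esign_γp : esign (γp r) = 1 := by
  rw [γp, KY_esign_cycleRange]
  norm_num [Fin.val_two, Nat.mod_eq_of_lt (show 2 < r + 2 + 1 by omega)]

private lemma KY_esign_σp (i : Fin (r+2)) : esign (σp i) = (-1 : ℝ) ^ (i : ℕ) := by
  rw [σp, KY_esign_mul, KY_esign_symm, KY_esign_cycleRange,
    KY_esign_swap (x := (0 : Fin (r+3))) (y := 1) (by simp [Fin.ext_iff]), Fin.val_succ,
    pow_succ]
  ring

private lemma KY_esign_τp (i : Fin (r+1)) : esign (τp i) = (-1 : ℝ) ^ (i : ℕ) := by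
  rw [τp, KY_esign_mul, KY_esign_symm, KY_esign_cycleRange, KY_esign_γp,
    Fin.val_succ, Fin.val_succ, pow_succ, pow_succ]
  ring

private lemma KY_esign_ρp (i : Fin (r+1)) : esign (ρp i) = (-1 : ℝ) ^ (i : ℕ) := by
  rw [ρp, KY_esign_mul, KY_esign_mul, KY_esign_symm, KY_esign_cycleRange, KY_esign_γp,
    Fin.val_succ, Fin.val_succ, pow_succ, pow_succ]
  ring

end Perms
section Tensor
variable {ι : Type*} [Fintype ι] [DecidableEq ι] {r : ℕ}

private noncomputable def Nf (Riem : ι → ι → ι → ι → ℝ) (ginv : ι → ι → ℝ)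
    (A : (Fin (r + 2) → ι) → ℝ) (α β γ : ι) (z : Fin (r + 1) → ι) : ℝ :=
  ∑ e, ∑ f, Riem α β γ e * ginv e f * A (Fin.cons f z)

private noncomputable def Bf (Riem : ι → ι → ι → ι → ℝ) (ginv : ι → ι → ℝ)
    (A : (Fin (r + 2) → ι) → ℝ) (a : ι) : (Fin (r + 3) → ι) → ℝ :=
  fun w => Nf Riem ginv A (w 0) (w 1) a fun k => w k.succ.succ

private noncomputable def Pf (Riem : ι → ι → ι → ι → ℝ) (ginv : ι → ι → ℝ)
    (A : (Fin (r + 2) → ι) → ℝ) (a : ι) : (Fin (r + 3) → ι) → ℝ :=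
  fun w => Nf Riem ginv A a (w 0) (w 1) fun k => w k.succ.succ

private noncomputable def Qf (Riem : ι → ι → ι → ι → ℝ) (ginv : ι → ι → ℝ)
    (A : (Fin (r + 2) → ι) → ℝ) (a : ι) : (Fin (r + 3) → ι) → ℝ :=
  fun w => Nf Riem ginv A (w 0) a (w 1) fun k => w k.succ.succ

private noncomputable def Cf (Riem : ι → ι → ι → ι → ℝ) (ginv : ι → ι → ℝ)
    (A : (Fin (r + 2) → ι) → ℝ) (a : ι) : (Fin (r + 3) → ι) → ℝ :=
  fun w => Nf Riem ginv A (w 0) (w 1) (w 2) (Fin.cons a fun k : Fin r => w k.succ.succ.succ)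

private noncomputable def Gf (Riem : ι → ι → ι → ι → ℝ) (ginv : ι → ι → ℝ)
    (A : (Fin (r + 2) → ι) → ℝ) (α β : ι) (v : Fin (r + 2) → ι) : ℝ :=
  ∑ i : Fin (r + 2), ∑ e, ∑ f, Riem α β (v i) e * ginv e f * A (Function.update v i f)

variable {Riem : ι → ι → ι → ι → ℝ} {ginv : ι → ι → ℝ} {A : (Fin (r + 2) → ι) → ℝ} {a : ι}

private lemma KY_G1_eq (hA : IsAlt A) (u : Fin (r+3) → ι) :
    Gf Riem ginv A a (u 0) (Fin.tail u)
      = ∑ i : Fin (r+2), (-1:ℝ)^(i:ℕ) * Pf Riem ginv A a (u ∘ σp i) := by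
  unfold Gf Pf Nf
  refine Finset.sum_congr rfl fun i _ => ?_
  rw [Finset.mul_sum]
  refine Finset.sum_congr rfl fun e _ => ?_
  rw [Finset.mul_sum]
  refine Finset.sum_congr rfl fun f _ => ?_
  rw [KY_isAlt_update hA]
  have e0 : (u ∘ σp i) 0 = u 0 := by rw [Function.comp_apply, KY_σp0]
  have e1 : (u ∘ σp i) 1 = Fin.tail u i := by rw [Function.comp_apply, KY_σp1]; rfl
  have e2 : (fun k : Fin (r+1) => (u ∘ σp i) k.succ.succ) = (Fin.tail u) ∘ i.succAbove := by
    funext k; rw [Function.comp_apply, KY_σps]; rfl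
  rw [e0, e1, e2]
  ring

private lemma KY_G2_eq (hA : IsAlt A) (u : Fin (r+3) → ι) :
    Gf Riem ginv A (u 0) (u 1) (Fin.cons a fun k : Fin (r+1) => u k.succ.succ)
      = Bf Riem ginv A a u
        + ∑ i : Fin (r+1), (-1:ℝ)^((i:ℕ)+1) * Cf Riem ginv A a (u ∘ τp i) := by
  unfold Gf Bf Cf Nf
  rw [Fin.sum_univ_succ]
  congr 1
  · refine Finset.sum_congr rfl fun e _ => Finset.sum_congr rfl fun f _ => ?_
    rw [Fin.cons_zero]
    have hupd : Function.update (Fin.cons a (fun k : Fin (r+1) => u k.succ.succ) : Fin (r+2) → ι) 0 f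
        = Fin.cons f fun k : Fin (r+1) => u k.succ.succ := by
      funext j
      induction j using Fin.cases with
      | zero => simp
      | succ k => simp [Function.update_of_ne (Fin.succ_ne_zero k), Fin.cons_succ]
    rw [hupd]
  · refine Finset.sum_congr rfl fun i _ => ?_
    rw [Finset.mul_sum]
    refine Finset.sum_congr rfl fun e _ => ?_
    rw [Finset.mul_sum]
    refine Finset.sum_congr rfl fun f _ => ?_
    rw [KY_isAlt_update hA]
    have ei : (Fin.cons a (fun k : Fin (r+1) => u k.succ.succ) : Fin (r+2) → ι) i.succ
        = u i.succ.succ := by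
      rw [Fin.cons_succ]
    have e0 : (u ∘ τp i) 0 = u 0 := by rw [Function.comp_apply, KY_τp0]
    have e1 : (u ∘ τp i) 1 = u 1 := by rw [Function.comp_apply, KY_τp1]
    have e2 : (u ∘ τp i) 2 = u i.succ.succ := by rw [Function.comp_apply, KY_τp2]
    have e3 : ((Fin.cons a fun k : Fin (r+1) => u k.succ.succ) ∘ (Fin.succAbove i.succ))
        = Fin.cons a fun k : Fin r => (u ∘ τp i) k.succ.succ.succ := by
      funext k
      induction k using Fin.cases with
      | zero =>
        rw [Function.comp_apply, Fin.succ_succAbove_zero, Fin.cons_zero, Fin.cons_zero]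
      | succ m =>
        rw [Function.comp_apply, Fin.succ_succAbove_succ, Fin.cons_succ, Fin.cons_succ,
          Function.comp_apply, KY_τps]
    rw [ei, e0, e1, e2, e3, Fin.val_succ]
    ring

private lemma KY_G3_eq (hA : IsAlt A) (u : Fin (r+3) → ι) :
    Gf Riem ginv A (u 1) a (Fin.cons (u 0) fun k : Fin (r+1) => u k.succ.succ)
      = Qf Riem ginv A a (u ∘ Equiv.swap 0 1)
        + ∑ i : Fin (r+1), (-1:ℝ)^((i:ℕ)+1) * Qf Riem ginv A a (u ∘ ρp i) := by
  unfold Gf Qf Nf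
  rw [Fin.sum_univ_succ]
  congr 1
  · refine Finset.sum_congr rfl fun e _ => Finset.sum_congr rfl fun f _ => ?_
    rw [Fin.cons_zero]
    have hupd : Function.update (Fin.cons (u 0) (fun k : Fin (r+1) => u k.succ.succ) : Fin (r+2) → ι) 0 f
        = Fin.cons f fun k : Fin (r+1) => u k.succ.succ := by
      funext j
      induction j using Fin.cases with
      | zero => simp
      | succ k => simp [Function.update_of_ne (Fin.succ_ne_zero k), Fin.cons_succ]
    have e0 : (u ∘ Equiv.swap (0 : Fin (r+3)) 1) 0 = u 1 := by
      rw [Function.comp_apply, Equiv.swap_apply_left]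
    have e1 : (u ∘ Equiv.swap (0 : Fin (r+3)) 1) 1 = u 0 := by
      rw [Function.comp_apply, Equiv.swap_apply_right]
    have e2 : (fun k : Fin (r+1) => (u ∘ Equiv.swap (0 : Fin (r+3)) 1) k.succ.succ)
        = fun k : Fin (r+1) => u k.succ.succ := by
      funext k; rw [Function.comp_apply, KY_swap01_ss]
    rw [hupd, e0, e1, e2]
  · refine Finset.sum_congr rfl fun i _ => ?_
    rw [Finset.mul_sum]
    refine Finset.sum_congr rfl fun e _ => ?_
    rw [Finset.mul_sum]
    refine Finset.sum_congr rfl fun f _ => ?_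
    rw [KY_isAlt_update hA]
    have ei : (Fin.cons (u 0) (fun k : Fin (r+1) => u k.succ.succ) : Fin (r+2) → ι) i.succ
        = u i.succ.succ := by
      rw [Fin.cons_succ]
    have e0 : (u ∘ ρp i) 0 = u 1 := by rw [Function.comp_apply, KY_ρp0]
    have e1 : (u ∘ ρp i) 1 = u i.succ.succ := by rw [Function.comp_apply, KY_ρp1]
    have e3 : ((Fin.cons (u 0) fun k : Fin (r+1) => u k.succ.succ) ∘ (Fin.succAbove i.succ))
        = fun k : Fin (r+1) => (u ∘ ρp i) k.succ.succ := by
      funext k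
      induction k using Fin.cases with
      | zero =>
        rw [Function.comp_apply, Fin.succ_succAbove_zero, Fin.cons_zero,
          Function.comp_apply, Fin.succ_zero_eq_one, Fin.succ_one_eq_two, KY_ρp2]
      | succ m =>
        rw [Function.comp_apply, Fin.succ_succAbove_succ, Fin.cons_succ,
          Function.comp_apply, KY_ρps]
    rw [ei, e0, e1, e3, Fin.val_succ]
    ring

private lemma KY_Q_eq_negP (hAs : ∀ a b c d, Riem a b c d = -Riem b a c d) (w : Fin (r+3) → ι) :
    Qf Riem ginv A a w = - Pf Riem ginv A a w := by
  unfold Qf Pf Nf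
  rw [← Finset.sum_neg_distrib]
  refine Finset.sum_congr rfl fun e _ => ?_
  rw [← Finset.sum_neg_distrib]
  refine Finset.sum_congr rfl fun f _ => ?_
  linear_combination (ginv e f * A (Fin.cons f fun k : Fin (r+1) => w k.succ.succ))
    * (hAs (w 0) a (w 1) e)

private lemma KY_bianchi_ptwise
    (hB : ∀ a b c d, Riem a b c d + Riem b c a d + Riem c a b d = 0) (w : Fin (r+3) → ι) :
    Bf Riem ginv A a w + Qf Riem ginv A a (w ∘ Equiv.swap 0 1) + Pf Riem ginv A a w = 0 := by
  have e0 : (w ∘ Equiv.swap (0 : Fin (r+3)) 1) 0 = w 1 := by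
    rw [Function.comp_apply, Equiv.swap_apply_left]
  have e1 : (w ∘ Equiv.swap (0 : Fin (r+3)) 1) 1 = w 0 := by
    rw [Function.comp_apply, Equiv.swap_apply_right]
  have e2 : (fun k : Fin (r+1) => (w ∘ Equiv.swap (0 : Fin (r+3)) 1) k.succ.succ)
      = fun k : Fin (r+1) => w k.succ.succ := by
    funext k; rw [Function.comp_apply, KY_swap01_ss]
  unfold Bf Qf Pf Nf
  rw [e0, e1, e2, ← Finset.sum_add_distrib, ← Finset.sum_add_distrib]
  rw [show (0:ℝ) = ∑ e : ι, 0 by simp]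
  refine Finset.sum_congr rfl fun e _ => ?_
  rw [← Finset.sum_add_distrib, ← Finset.sum_add_distrib]
  rw [show (0:ℝ) = ∑ f : ι, 0 by simp]
  refine Finset.sum_congr rfl fun f _ => ?_
  linear_combination (ginv e f * A (Fin.cons f fun k : Fin (r+1) => w k.succ.succ))
    * (hB (w 0) (w 1) a e)

private lemma KY_C_cyclic
    (hB : ∀ a b c d, Riem a b c d + Riem b c a d + Riem c a b d = 0) (w : Fin (r+3) → ι) :
    Cf Riem ginv A a w + Cf Riem ginv A a (w ∘ γp r) + Cf Riem ginv A a (w ∘ ⇑(γp r * γp r)) = 0 := by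
  have g0 : (w ∘ γp r) 0 = w 1 := by rw [Function.comp_apply, KY_gp0]
  have g1 : (w ∘ γp r) 1 = w 2 := by rw [Function.comp_apply, KY_gp1]
  have g2 : (w ∘ γp r) 2 = w 0 := by rw [Function.comp_apply, KY_gp2]
  have gs : (fun k : Fin r => (w ∘ γp r) k.succ.succ.succ)
      = fun k : Fin r => w k.succ.succ.succ := by
    funext k; rw [Function.comp_apply, KY_gpfix]
  have h0 : (w ∘ ⇑(γp r * γp r)) 0 = w 2 := by
    rw [Function.comp_apply, Equiv.Perm.mul_apply, KY_gp0, KY_gp1]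
  have h1 : (w ∘ ⇑(γp r * γp r)) 1 = w 0 := by
    rw [Function.comp_apply, Equiv.Perm.mul_apply, KY_gp1, KY_gp2]
  have h2 : (w ∘ ⇑(γp r * γp r)) 2 = w 1 := by
    rw [Function.comp_apply, Equiv.Perm.mul_apply, KY_gp2, KY_gp0]
  have hs : (fun k : Fin r => (w ∘ ⇑(γp r * γp r)) k.succ.succ.succ)
      = fun k : Fin r => w k.succ.succ.succ := by
    funext k; rw [Function.comp_apply, Equiv.Perm.mul_apply, KY_gpfix, KY_gpfix]
  unfold Cf Nf
  rw [g0, g1, g2, gs, h0, h1, h2, hs, ← Finset.sum_add_distrib, ← Finset.sum_add_distrib]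
  rw [show (0:ℝ) = ∑ e : ι, 0 by simp]
  refine Finset.sum_congr rfl fun e _ => ?_
  rw [← Finset.sum_add_distrib, ← Finset.sum_add_distrib]
  rw [show (0:ℝ) = ∑ f : ι, 0 by simp]
  refine Finset.sum_congr rfl fun f _ => ?_
  linear_combination (ginv e f * A (Fin.cons f (Fin.cons a fun k : Fin r => w k.succ.succ.succ)))
    * (hB (w 0) (w 1) (w 2) e)

end Tensor
section Main
variable {ι : Type*} [Fintype ι] [DecidableEq ι] {r : ℕ}
variable {Riem : ι → ι → ι → ι → ℝ} {ginv : ι → ι → ℝ} {A : (Fin (r + 2) → ι) → ℝ} {a : ι}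

private lemma KY_main_alt (hA : IsAlt A)
    (hAs : ∀ a b c d, Riem a b c d = -Riem b a c d)
    (hB : ∀ a b c d, Riem a b c d + Riem b c a d + Riem c a b d = 0)
    (w : Fin (r+3) → ι) :
    alt (fun u : Fin (r+3) → ι =>
        Gf Riem ginv A a (u 0) (Fin.tail u)
        - Gf Riem ginv A (u 0) (u 1) (Fin.cons a fun k : Fin (r+1) => u k.succ.succ)
        + Gf Riem ginv A (u 1) a (Fin.cons (u 0) fun k : Fin (r+1) => u k.succ.succ)) w
      = -((r:ℝ)+3) * alt (Bf Riem ginv A a) w := by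
  have hQ : alt (Qf Riem ginv A a) w = - alt (Pf Riem ginv A a) w := by
    rw [KY_alt_congr (KY_Q_eq_negP hAs) w,
      KY_alt_congr (fun u => (neg_eq_neg_one_mul (Pf Riem ginv A a u))) w, KY_alt_smul]
    ring
  have hsw : alt (fun u : Fin (r+3) → ι => Qf Riem ginv A a (u ∘ Equiv.swap 0 1)) w
      = alt (Pf Riem ginv A a) w := by
    rw [KY_alt_precomp, KY_esign_swap (x := (0 : Fin (r+3))) (y := 1) (by simp [Fin.ext_iff]), hQ]
    ring
  have h1 : alt (fun u : Fin (r+3) → ι => Gf Riem ginv A a (u 0) (Fin.tail u)) w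
      = ((r:ℝ)+2) * alt (Pf Riem ginv A a) w := by
    rw [KY_alt_congr (KY_G1_eq hA) w, KY_alt_sum]
    have hterm : ∀ i : Fin (r+2),
        alt (fun u => (-1:ℝ)^(i:ℕ) * Pf Riem ginv A a (u ∘ σp i)) w
          = alt (Pf Riem ginv A a) w := by
      intro i
      rw [KY_alt_smul, KY_alt_precomp, KY_esign_σp, ← mul_assoc, ← mul_pow]
      norm_num
    rw [Finset.sum_congr rfl fun i _ => hterm i, Finset.sum_const, Finset.card_univ,
      Fintype.card_fin, nsmul_eq_mul]
    push_cast; ring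
  have h2 : alt (fun u : Fin (r+3) → ι =>
        Gf Riem ginv A (u 0) (u 1) (Fin.cons a fun k : Fin (r+1) => u k.succ.succ)) w
      = alt (Bf Riem ginv A a) w - ((r:ℝ)+1) * alt (Cf Riem ginv A a) w := by
    rw [KY_alt_congr (KY_G2_eq hA) w, KY_alt_add, KY_alt_sum]
    have hterm : ∀ i : Fin (r+1),
        alt (fun u => (-1:ℝ)^((i:ℕ)+1) * Cf Riem ginv A a (u ∘ τp i)) w
          = - alt (Cf Riem ginv A a) w := by
      intro i
      rw [KY_alt_smul, KY_alt_precomp, KY_esign_τp, pow_succ]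
      have hp : (-1:ℝ)^(i:ℕ) * (-1)^(i:ℕ) = 1 := by rw [← mul_pow]; norm_num
      linear_combination (-(alt (Cf Riem ginv A a) w)) * hp
    rw [Finset.sum_congr rfl fun i _ => hterm i, Finset.sum_const, Finset.card_univ,
      Fintype.card_fin, nsmul_eq_mul]
    push_cast; ring
  have h3 : alt (fun u : Fin (r+3) → ι =>
        Gf Riem ginv A (u 1) a (Fin.cons (u 0) fun k : Fin (r+1) => u k.succ.succ)) w
      = ((r:ℝ)+2) * alt (Pf Riem ginv A a) w := by
    rw [KY_alt_congr (KY_G3_eq hA) w, KY_alt_add, KY_alt_sum, hsw]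
    have hterm : ∀ i : Fin (r+1),
        alt (fun u => (-1:ℝ)^((i:ℕ)+1) * Qf Riem ginv A a (u ∘ ρp i)) w
          = alt (Pf Riem ginv A a) w := by
      intro i
      rw [KY_alt_smul, KY_alt_precomp, KY_esign_ρp, hQ, pow_succ]
      have hp : (-1:ℝ)^(i:ℕ) * (-1)^(i:ℕ) = 1 := by rw [← mul_pow]; norm_num
      linear_combination (alt (Pf Riem ginv A a) w) * hp
    rw [Finset.sum_congr rfl fun i _ => hterm i, Finset.sum_const, Finset.card_univ,
      Fintype.card_fin, nsmul_eq_mul]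
    push_cast; ring
  have hPB : 2 * alt (Pf Riem ginv A a) w + alt (Bf Riem ginv A a) w = 0 := by
    have h0 : alt (Bf Riem ginv A a) w
        + alt (fun u : Fin (r+3) → ι => Qf Riem ginv A a (u ∘ Equiv.swap 0 1)) w
        + alt (Pf Riem ginv A a) w = 0 := by
      rw [← KY_alt_add3, KY_alt_congr (KY_bianchi_ptwise hB) w, KY_alt_zero]
    rw [hsw] at h0
    linarith
  have hC0 : alt (Cf Riem ginv A a) w = 0 := by
    have h0 : alt (Cf Riem ginv A a) w
        + alt (fun u : Fin (r+3) → ι => Cf Riem ginv A a (u ∘ γp r)) w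
        + alt (fun u : Fin (r+3) → ι => Cf Riem ginv A a (u ∘ ⇑(γp r * γp r))) w = 0 := by
      rw [← KY_alt_add3, KY_alt_congr (KY_C_cyclic hB) w, KY_alt_zero]
    rw [KY_alt_precomp, KY_alt_precomp, KY_esign_mul, KY_esign_γp] at h0
    linarith
  rw [KY_alt_combo, h1, h2, h3, hC0]
  linear_combination ((r:ℝ)+2) * hPB

end Main

/-- If `A` is a Killing–Yano tensor of order `p = r+2` (its
covariant derivative `D = ∇A` is totally antisymmetric), then with `DDA = ∇∇A`
subject to the Ricci identity and to the differentiated KY equation, the second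
derivative satisfies
`2 ∇_a ∇_b A_{c d e₃…e_p} = −(p+1) A_{f[d e₃…e_p} R_{bc]a}{}^f`,
the antisymmetrization being over the `p+1` indices `b, c, d, e₃, …, e_p`. -/
theorem statement12 {ι : Type*} [Fintype ι] [DecidableEq ι] {r : ℕ}
    (g ginv : ι → ι → ℝ)
    (hgsymm : ∀ a b, g a b = g b a) (hginvsymm : ∀ a b, ginv a b = ginv b a)
    (hinv : ∀ a b, ∑ c, ginv a c * g c b = if a = b then (1 : ℝ) else 0)
    (A : (Fin (r + 2) → ι) → ℝ) (hAalt : IsAlt A)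
    (D : ι → (Fin (r + 2) → ι) → ℝ) (hDalt : ∀ a, IsAlt (D a))
    (hKY : ∀ (a : ι) (v : Fin (r + 2) → ι), D a v = alt (totalD D) (Fin.cons a v))
    (DDA : ι → ι → (Fin (r + 2) → ι) → ℝ)
    (hDKY : ∀ (a b : ι) (v : Fin (r + 2) → ι),
      DDA a b v = alt (totalD (DDA a)) (Fin.cons b v))
    (Riem : ι → ι → ι → ι → ℝ)
    (hRicciId : ∀ (a b : ι) (v : Fin (r + 2) → ι),
      DDA a b v - DDA b a v
        = ∑ i : Fin (r + 2), ∑ e, ∑ f,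
            Riem a b (v i) e * ginv e f * A (Function.update v i f))
    (hRiemAsym₁ : ∀ a b c d, Riem a b c d = -Riem b a c d)
    (hRiemAsym₂ : ∀ a b c d, Riem a b c d = -Riem a b d c)
    (hRiemPair : ∀ a b c d, Riem a b c d = Riem c d a b)
    (hBianchi : ∀ a b c d, Riem a b c d + Riem b c a d + Riem c a b d = 0) :
    ∀ (a b : ι) (v : Fin (r + 2) → ι),
      2 * DDA a b v
        = -((r : ℝ) + 3) *
            alt (fun w : Fin (r + 3) → ι =>
              ∑ e, ∑ f, Riem (w 0) (w 1) a e * ginv e f *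
                A (Fin.cons f fun i : Fin (r + 1) => w i.succ.succ))
              (Fin.cons b v) := by
  intro a b v
  have hA2 : ∀ α, IsAlt (totalD (DDA α)) := by
    intro α
    refine KY_isAlt_of_eq_alt fun u => ?_
    have h := hDKY α (u 0) (Fin.tail u)
    rwa [Fin.cons_self_tail] at h
  have hswap : ∀ (α x y : ι) (z : Fin (r+1) → ι),
      DDA α x (Fin.cons y z) = -DDA α y (Fin.cons x z) := by
    intro α x y z
    have key : ∀ (x y : ι) (z : Fin (r+1) → ι),
        totalD (DDA α) (Fin.cons x (Fin.cons y z)) = DDA α x (Fin.cons y z) :=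
      fun x y z => rfl
    rw [← key x y z, ← key y x z]
    exact KY_isAlt_swap01 (hA2 α) x y z
  have Estep : ∀ (b' : ι) (v' : Fin (r+2) → ι),
      2 * DDA a b' v'
        = Gf Riem ginv A a b' v'
          - Gf Riem ginv A b' (v' 0) (Fin.cons a (Fin.tail v'))
          + Gf Riem ginv A (v' 0) a (Fin.cons b' (Fin.tail v')) := by
    intro b' v'
    have M1 : DDA a b' v' - DDA b' a v' = Gf Riem ginv A a b' v' := hRicciId a b' v'
    have M2 : DDA b' (v' 0) (Fin.cons a (Fin.tail v'))
        - DDA (v' 0) b' (Fin.cons a (Fin.tail v'))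
        = Gf Riem ginv A b' (v' 0) (Fin.cons a (Fin.tail v')) := hRicciId _ _ _
    have M3 : DDA (v' 0) a (Fin.cons b' (Fin.tail v'))
        - DDA a (v' 0) (Fin.cons b' (Fin.tail v'))
        = Gf Riem ginv A (v' 0) a (Fin.cons b' (Fin.tail v')) := hRicciId _ _ _
    have S1 : DDA b' a v' = - DDA b' (v' 0) (Fin.cons a (Fin.tail v')) := by
      conv_lhs => rw [← Fin.cons_self_tail v']
      exact hswap b' a (v' 0) (Fin.tail v')
    have S2 : DDA (v' 0) b' (Fin.cons a (Fin.tail v'))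
        = - DDA (v' 0) a (Fin.cons b' (Fin.tail v')) := hswap _ _ _ _
    have S3 : DDA a (v' 0) (Fin.cons b' (Fin.tail v')) = - DDA a b' v' := by
      rw [hswap a (v' 0) b' (Fin.tail v'), Fin.cons_self_tail]
    linarith
  have hstep2 : ∀ u : Fin (r+3) → ι,
      2 * DDA a (u 0) (Fin.tail u)
        = Gf Riem ginv A a (u 0) (Fin.tail u)
          - Gf Riem ginv A (u 0) (u 1) (Fin.cons a fun k : Fin (r+1) => u k.succ.succ)
          + Gf Riem ginv A (u 1) a (Fin.cons (u 0) fun k : Fin (r+1) => u k.succ.succ) := by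
    intro u
    have h := Estep (u 0) (Fin.tail u)
    have ht0 : Fin.tail u 0 = u 1 := by
      show u (Fin.succ 0) = u 1
      rw [Fin.succ_zero_eq_one]
    have htt : Fin.tail (Fin.tail u) = fun k : Fin (r+1) => u k.succ.succ := rfl
    rw [ht0, htt] at h
    exact h
  have hiso : IsAlt (fun u : Fin (r+3) → ι => 2 * DDA a (u 0) (Fin.tail u)) := by
    intro σ u
    have h := hA2 a σ u
    show 2 * totalD (DDA a) (u ∘ σ) = esign σ * (2 * totalD (DDA a) u)
    rw [h]; ring
  calc 2 * DDA a b v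
      = alt (fun u : Fin (r+3) → ι => 2 * DDA a (u 0) (Fin.tail u)) (Fin.cons b v) := by
        rw [KY_alt_of_isAlt hiso]
        simp
    _ = alt (fun u : Fin (r+3) → ι =>
          Gf Riem ginv A a (u 0) (Fin.tail u)
          - Gf Riem ginv A (u 0) (u 1) (Fin.cons a fun k : Fin (r+1) => u k.succ.succ)
          + Gf Riem ginv A (u 1) a (Fin.cons (u 0) fun k : Fin (r+1) => u k.succ.succ))
          (Fin.cons b v) := KY_alt_congr hstep2 _
    _ = -((r:ℝ)+3) * alt (Bf Riem ginv A a) (Fin.cons b v) :=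
        KY_main_alt hAalt hRiemAsym₁ hBianchi (Fin.cons b v)
    _ = -((r : ℝ) + 3) *
            alt (fun w : Fin (r + 3) → ι =>
              ∑ e, ∑ f, Riem (w 0) (w 1) a e * ginv e f *
                A (Fin.cons f fun i : Fin (r + 1) => w i.succ.succ))
              (Fin.cons b v) := rfl
end
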